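/- arXiv:1101.1132 — 5 statements merged into one kernel-verified Lean document; each statement's English description precedes it below -/
import Mathlib

section
/- The integral of K'(x)^2 over [0,1] equals twice the integral of K(x)^2 over [0,1], i.e., ∫₀¹ K'(x)² dx = 2 ∫₀¹ K(x)² dx. -/
open Real intervalIntegral

noncomputable def ellK (x : ℝ) : ℝ := ∫ θ in (0:ℝ)..(π/2), 1 / Real.sqrt (1 - x^2 * Real.sin θ ^ 2)

noncomputable def ellE (x : ℝ) : ℝ := ∫ θ in (0:ℝ)..(π/2), Real.sqrt (1 - x^2 * Real.sin θ ^ 2)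

noncomputable def ellK' (x : ℝ) : ℝ := ellK (Real.sqrt (1 - x^2))

noncomputable def ellE' (x : ℝ) : ℝ := ellE (Real.sqrt (1 - x^2))

open Set MeasureTheory

set_option maxHeartbeats 1000000 in
/-- Landen's transformation: `K (2√t/(1+t)) = (1+t) K t` for `t ∈ (0,1)`. -/
lemma landen {t : ℝ} (ht : t ∈ Set.Ioo (0:ℝ) 1) :
    ellK (2 * Real.sqrt t / (1 + t)) = (1 + t) * ellK t := by
  obtain ⟨ht0, ht1⟩ := ht
  have h1t : (0:ℝ) < 1 + t := by linarith
  have hu2 : (2 * Real.sqrt t / (1 + t)) ^ 2 = 4 * t / (1 + t) ^ 2 := by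
    rw [div_pow, mul_pow, Real.sq_sqrt ht0.le]; ring_nf
  set g : ℝ → ℝ := fun θ => (1 + t) * Real.sin θ / (1 + t * Real.sin θ ^ 2) with hg
  set φ : ℝ → ℝ := fun θ => Real.arcsin (g θ) with hφ
  set φ' : ℝ → ℝ := fun θ =>
    (1 / Real.sqrt (1 - g θ ^ 2)) *
      ((1 + t) * Real.cos θ * (1 - t * Real.sin θ ^ 2) / (1 + t * Real.sin θ ^ 2) ^ 2) with hφ'
  have hD : ∀ θ : ℝ, 0 < 1 + t * Real.sin θ ^ 2 := fun θ => by nlinarith [sq_nonneg (Real.sin θ)]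
  -- basic facts for θ in the open interval
  have hsin : ∀ θ ∈ Set.Ioo (0:ℝ) (π/2), 0 < Real.sin θ ∧ Real.sin θ < 1 ∧ 0 < Real.cos θ := by
    intro θ hθ
    have hπ := Real.pi_pos
    have hc : 0 < Real.cos θ := Real.cos_pos_of_mem_Ioo ⟨by linarith [hθ.1], hθ.2⟩
    have hs : 0 < Real.sin θ := Real.sin_pos_of_pos_of_lt_pi hθ.1 (by linarith [hθ.2])
    have hpyth := Real.sin_sq_add_cos_sq θ
    refine ⟨hs, by nlinarith, hc⟩
  have hgmem : ∀ θ ∈ Set.Ioo (0:ℝ) (π/2), 0 < g θ ∧ g θ < 1 := by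
    intro θ hθ
    obtain ⟨hs, hs1, hc⟩ := hsin θ hθ
    constructor
    · exact div_pos (by nlinarith) (hD θ)
    · rw [div_lt_one (hD θ)]
      have h2 : t * Real.sin θ < 1 := by nlinarith [mul_lt_of_lt_one_right ht0 hs1]
      nlinarith [mul_pos (sub_pos.2 hs1) (sub_pos.2 h2)]
  -- derivative of g
  have hgd : ∀ θ : ℝ, HasDerivAt g
      ((1 + t) * Real.cos θ * (1 - t * Real.sin θ ^ 2) / (1 + t * Real.sin θ ^ 2) ^ 2) θ := by
    intro θ
    have h1 : HasDerivAt (fun θ : ℝ => (1 + t) * Real.sin θ) ((1 + t) * Real.cos θ) θ :=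
      (Real.hasDerivAt_sin θ).const_mul _
    have h2 : HasDerivAt (fun θ : ℝ => 1 + t * Real.sin θ ^ 2)
        (t * ((2 : ℕ) * Real.sin θ ^ (2 - 1) * Real.cos θ)) θ :=
      (((Real.hasDerivAt_sin θ).pow 2).const_mul t).const_add 1
    have h3 := h1.div h2 (ne_of_gt (hD θ))
    have hDne := ne_of_gt (hD θ)
    exact h3.congr_deriv (by rw [show (2:ℕ) - 1 = 1 from rfl, pow_one]; push_cast; ring)
  -- derivative of φ on the open interval
  have hφd : ∀ θ ∈ Set.Ioo (0:ℝ) (π/2), HasDerivAt φ (φ' θ) θ := by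
    intro θ hθ
    obtain ⟨hg0, hg1⟩ := hgmem θ hθ
    have harc := Real.hasDerivAt_arcsin (x := g θ) (by linarith) (ne_of_lt hg1)
    have := harc.comp θ (hgd θ)
    exact this
  -- image of the open interval under φ
  have hcontφ : Continuous φ := by
    apply Real.continuous_arcsin.comp
    exact (continuous_const.mul Real.continuous_sin).div
      (continuous_const.add (continuous_const.mul (Real.continuous_sin.pow 2)))
      (fun θ => ne_of_gt (hD θ))
  have hφ0 : φ 0 = 0 := by simp [hφ, hg]
  have hφpi : φ (π/2) = π/2 := by
    have : g (π/2) = 1 := by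
      simp only [hg, Real.sin_pi_div_two, one_pow, mul_one]
      rw [div_self (ne_of_gt h1t)]
    simp [hφ, this, Real.arcsin_one]
  have himg : φ '' Set.Ioo 0 (π/2) = Set.Ioo 0 (π/2) := by
    apply Set.Subset.antisymm
    · rintro _ ⟨θ, hθ, rfl⟩
      obtain ⟨hg0, hg1⟩ := hgmem θ hθ
      exact ⟨Real.arcsin_pos.2 hg0, Real.arcsin_lt_pi_div_two.2 hg1⟩
    · intro y hy
      refine intermediate_value_Ioo (by positivity) hcontφ.continuousOn ?_
      rw [hφ0, hφpi]; exact hy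
  -- injectivity of φ on the open interval
  have hinj : Set.InjOn φ (Set.Ioo 0 (π/2)) := by
    intro a ha b hb hab
    obtain ⟨hga0, hga1⟩ := hgmem a ha
    obtain ⟨hgb0, hgb1⟩ := hgmem b hb
    have hgab : g a = g b :=
      (Real.arcsin_inj (by linarith) hga1.le (by linarith) hgb1.le).1 hab
    obtain ⟨hsa, hsa1, _⟩ := hsin a ha
    obtain ⟨hsb, hsb1, _⟩ := hsin b hb
    have hsab : Real.sin a = Real.sin b := by
      have h1 := (div_eq_div_iff (ne_of_gt (hD a)) (ne_of_gt (hD b))).1 hgab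
      have key : (Real.sin a - Real.sin b) * (1 - t * Real.sin a * Real.sin b) = 0 := by
        nlinarith [h1]
      have hpos : 0 < 1 - t * Real.sin a * Real.sin b := by
        have h2 : Real.sin a * Real.sin b < 1 := by nlinarith
        nlinarith [mul_lt_of_lt_one_right ht0 h2]
      have := mul_eq_zero.1 key
      rcases this with h | h
      · linarith [sub_eq_zero.1 h]
      · linarith
    have hπ := Real.pi_pos
    exact Real.injOn_sin ⟨by linarith [ha.1], by linarith [ha.2]⟩
      ⟨by linarith [hb.1], by linarith [hb.2]⟩ hsab
  -- change of variables
  have hπ2 : (0:ℝ) ≤ π / 2 := by positivity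
  rw [ellK, ellK, intervalIntegral.integral_of_le hπ2, intervalIntegral.integral_of_le hπ2,
    MeasureTheory.integral_Ioc_eq_integral_Ioo, MeasureTheory.integral_Ioc_eq_integral_Ioo]
  calc (∫ x in Set.Ioo (0:ℝ) (π/2),
          1 / Real.sqrt (1 - (2 * Real.sqrt t / (1 + t)) ^ 2 * Real.sin x ^ 2))
      = ∫ x in φ '' Set.Ioo (0:ℝ) (π/2),
          1 / Real.sqrt (1 - (2 * Real.sqrt t / (1 + t)) ^ 2 * Real.sin x ^ 2) := by rw [himg]
    _ = ∫ θ in Set.Ioo (0:ℝ) (π/2),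
          |φ' θ| • (1 / Real.sqrt (1 - (2 * Real.sqrt t / (1 + t)) ^ 2 * Real.sin (φ θ) ^ 2)) :=
        MeasureTheory.integral_image_eq_integral_abs_deriv_smul measurableSet_Ioo
          (fun θ hθ => (hφd θ hθ).hasDerivWithinAt) hinj _
    _ = ∫ θ in Set.Ioo (0:ℝ) (π/2), (1 + t) * (1 / Real.sqrt (1 - t ^ 2 * Real.sin θ ^ 2)) := by
        apply MeasureTheory.setIntegral_congr_fun measurableSet_Ioo
        intro θ hθ
        obtain ⟨hs, hs1, hc⟩ := hsin θ hθ
        obtain ⟨hg0, hg1⟩ := hgmem θ hθ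
        have hDθ := hD θ
        have hgθ : g θ = (1 + t) * Real.sin θ / (1 + t * Real.sin θ ^ 2) := rfl
        have hS2 : Real.sin θ ^ 2 < 1 := by nlinarith [mul_pos hc hc, Real.sin_sq_add_cos_sq θ]
        have hN : 0 < 1 - t * Real.sin θ ^ 2 := by
          linarith [mul_lt_of_lt_one_right ht0 hS2]
        have hQ : 0 < 1 - t ^ 2 * Real.sin θ ^ 2 := by
          have ht2 : 0 < t ^ 2 := pow_pos ht0 2
          have : t ^ 2 * Real.sin θ ^ 2 < t ^ 2 := mul_lt_of_lt_one_right ht2 hS2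
          nlinarith
        have hsinφ : Real.sin (φ θ) = g θ := Real.sin_arcsin (by linarith) hg1.le
        have hsq1 : 1 - (2 * Real.sqrt t / (1 + t)) ^ 2 * g θ ^ 2
            = ((1 - t * Real.sin θ ^ 2) / (1 + t * Real.sin θ ^ 2)) ^ 2 := by
          rw [hu2, hgθ]
          field_simp
          ring
        have hsqrt1 : Real.sqrt (1 - (2 * Real.sqrt t / (1 + t)) ^ 2 * g θ ^ 2)
            = (1 - t * Real.sin θ ^ 2) / (1 + t * Real.sin θ ^ 2) := by
          rw [hsq1, Real.sqrt_sq (by positivity)]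
        have hsq2 : 1 - g θ ^ 2
            = (Real.cos θ * Real.sqrt (1 - t ^ 2 * Real.sin θ ^ 2)
                / (1 + t * Real.sin θ ^ 2)) ^ 2 := by
          have h1 : (Real.cos θ * Real.sqrt (1 - t ^ 2 * Real.sin θ ^ 2)
              / (1 + t * Real.sin θ ^ 2)) ^ 2
              = Real.cos θ ^ 2 * (1 - t ^ 2 * Real.sin θ ^ 2)
                / (1 + t * Real.sin θ ^ 2) ^ 2 := by
            rw [div_pow, mul_pow, Real.sq_sqrt hQ.le]
          have hpyth : Real.cos θ ^ 2 = 1 - Real.sin θ ^ 2 := by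
            have := Real.sin_sq_add_cos_sq θ; linarith
          rw [h1, hgθ, hpyth]
          field_simp
          ring
        have hsqrt2 : Real.sqrt (1 - g θ ^ 2)
            = Real.cos θ * Real.sqrt (1 - t ^ 2 * Real.sin θ ^ 2)
                / (1 + t * Real.sin θ ^ 2) := by
          rw [hsq2, Real.sqrt_sq (by positivity)]
        have hQs : 0 < Real.sqrt (1 - t ^ 2 * Real.sin θ ^ 2) := Real.sqrt_pos.2 hQ
        have hsg : 0 < Real.sqrt (1 - g θ ^ 2) := by rw [hsqrt2]; positivity
        have hφ'pos : 0 < φ' θ := by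
          have h3 : 0 < (1 + t) * Real.cos θ * (1 - t * Real.sin θ ^ 2)
              / (1 + t * Real.sin θ ^ 2) ^ 2 :=
            div_pos (mul_pos (mul_pos h1t hc) hN) (pow_pos hDθ 2)
          simp only [hφ']
          exact mul_pos (one_div_pos.2 hsg) h3
        show |φ' θ| • (1 / Real.sqrt (1 - (2 * Real.sqrt t / (1 + t)) ^ 2 * Real.sin (φ θ) ^ 2))
            = (1 + t) * (1 / Real.sqrt (1 - t ^ 2 * Real.sin θ ^ 2))
        rw [smul_eq_mul, abs_of_pos hφ'pos, hsinφ, hsqrt1]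
        simp only [hφ']
        rw [hsqrt2]
        have hDne : (1 + t * Real.sin θ ^ 2) ≠ 0 := ne_of_gt hDθ
        have hNne : (1 - t * Real.sin θ ^ 2) ≠ 0 := ne_of_gt hN
        have hcne : Real.cos θ ≠ 0 := ne_of_gt hc
        have hQne : Real.sqrt (1 - t ^ 2 * Real.sin θ ^ 2) ≠ 0 := ne_of_gt hQs
        field_simp
    _ = (1 + t) * ∫ θ in Set.Ioo (0:ℝ) (π/2), 1 / Real.sqrt (1 - t ^ 2 * Real.sin θ ^ 2) :=
        MeasureTheory.integral_const_mul _ _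

set_option maxHeartbeats 1000000 in
theorem stmt_0 :
    (∫ x in (0:ℝ)..1, ellK' x ^ 2) = 2 * ∫ x in (0:ℝ)..1, ellK x ^ 2 := by
  have h01 : (0:ℝ) ≤ 1 := zero_le_one
  rw [intervalIntegral.integral_of_le h01, intervalIntegral.integral_of_le h01,
    MeasureTheory.integral_Ioc_eq_integral_Ioo, MeasureTheory.integral_Ioc_eq_integral_Ioo]
  set ψ : ℝ → ℝ := fun t => (1 - t) / (1 + t) with hψ
  have hmem : ∀ t ∈ Set.Ioo (0:ℝ) 1, ψ t ∈ Set.Ioo (0:ℝ) 1 := by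
    intro t ht
    obtain ⟨ht0, ht1⟩ := ht
    have h1t : (0:ℝ) < 1 + t := by linarith
    constructor
    · exact div_pos (by linarith) h1t
    · rw [div_lt_one h1t]; linarith
  have himg : ψ '' Set.Ioo 0 1 = Set.Ioo 0 1 := by
    apply Set.Subset.antisymm
    · rintro _ ⟨t, ht, rfl⟩; exact hmem t ht
    · intro y hy
      obtain ⟨hy0, hy1⟩ := hy
      refine ⟨(1 - y) / (1 + y), hmem y ⟨hy0, hy1⟩, ?_⟩
      have h1y : (0:ℝ) < 1 + y := by linarith
      have h1y' : (1:ℝ) + y ≠ 0 := ne_of_gt h1y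
      simp only [hψ]
      rw [div_eq_iff (by
        have hw : 0 < (1 - y) / (1 + y) := div_pos (by linarith) h1y
        intro h; linarith)]
      field_simp
      ring
  have hderiv : ∀ t ∈ Set.Ioo (0:ℝ) 1,
      HasDerivWithinAt ψ (-2 / (1 + t) ^ 2) (Set.Ioo 0 1) t := by
    intro t ht
    have h1t : (0:ℝ) < 1 + t := by linarith [ht.1]
    have h1 : HasDerivAt (fun t : ℝ => 1 - t) (-1) t := by
      exact (hasDerivAt_id t).const_sub 1
    have h2 : HasDerivAt (fun t : ℝ => 1 + t) 1 t := by
      simpa using (hasDerivAt_id t).const_add 1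
    have h3 := h1.div h2 (ne_of_gt h1t)
    have : HasDerivAt ψ (-2 / (1 + t) ^ 2) t := by
      exact h3.congr_deriv (by ring)
    exact this.hasDerivWithinAt
  have hinj : Set.InjOn ψ (Set.Ioo 0 1) := by
    intro a ha b hb hab
    have h1a : (0:ℝ) < 1 + a := by linarith [ha.1]
    have h1b : (0:ℝ) < 1 + b := by linarith [hb.1]
    have := (div_eq_div_iff (ne_of_gt h1a) (ne_of_gt h1b)).1 hab
    nlinarith
  calc (∫ x in Set.Ioo (0:ℝ) 1, ellK' x ^ 2)
      = ∫ x in ψ '' Set.Ioo (0:ℝ) 1, ellK' x ^ 2 := by rw [himg]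
    _ = ∫ t in Set.Ioo (0:ℝ) 1, |(-2 / (1 + t) ^ 2)| • ellK' (ψ t) ^ 2 :=
        MeasureTheory.integral_image_eq_integral_abs_deriv_smul measurableSet_Ioo hderiv hinj _
    _ = ∫ t in Set.Ioo (0:ℝ) 1, 2 * ellK t ^ 2 := by
        apply MeasureTheory.setIntegral_congr_fun measurableSet_Ioo
        intro t ht
        obtain ⟨ht0, ht1⟩ := ht
        have h1t : (0:ℝ) < 1 + t := by linarith
        have hsq : 1 - ψ t ^ 2 = (2 * Real.sqrt t / (1 + t)) ^ 2 := by
          have h4 : (2 * Real.sqrt t / (1 + t)) ^ 2 = 4 * t / (1 + t) ^ 2 := by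
            rw [div_pow, mul_pow, Real.sq_sqrt ht0.le]; ring_nf
          simp only [hψ]
          rw [h4, div_pow]
          field_simp
          ring
        have hKp : ellK' (ψ t) = (1 + t) * ellK t := by
          rw [ellK', hsq, Real.sqrt_sq (by positivity)]
          exact landen ⟨ht0, ht1⟩
        show |(-2 / (1 + t) ^ 2)| • ellK' (ψ t) ^ 2 = 2 * ellK t ^ 2
        rw [smul_eq_mul, hKp, abs_div, abs_neg, abs_two, abs_of_pos (pow_pos h1t 2)]
        field_simp
    _ = 2 * ∫ t in Set.Ioo (0:ℝ) 1, ellK t ^ 2 := MeasureTheory.integral_const_mul _ _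
end

section
/- For all x in [0,1], E(x) = ((1+x)/2)·E(2√x/(1+x)) + ((1-x²)/2)·K(x). -/
open Real intervalIntegral

private lemma den_pos {k : ℝ} (hk0 : 0 ≤ k) (hk1 : k < 1) (θ : ℝ) :
    0 < 1 - k^2 * Real.sin θ ^ 2 := by
  nlinarith [Real.sin_sq_le_one θ, sq_nonneg (Real.sin θ), sq_nonneg k]

private lemma contE (x : ℝ) : Continuous fun θ : ℝ => Real.sqrt (1 - x^2 * Real.sin θ ^ 2) := by
  fun_prop

private lemma contK {k : ℝ} (hk0 : 0 ≤ k) (hk1 : k < 1) :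
    Continuous fun θ : ℝ => 1 / Real.sqrt (1 - k^2 * Real.sin θ ^ 2) :=
  continuous_const.div (contE k) (fun θ => (Real.sqrt_pos.2 (den_pos hk0 hk1 θ)).ne')

set_option maxHeartbeats 2000000 in
private lemma landen_s2 (k : ℝ) (hk0 : 0 ≤ k) (hk1 : k < 1) :
    ellE k = ((1 + k) / 2) * ellE (2 * Real.sqrt k / (1 + k)) + ((1 - k^2) / 2) * ellK k := by
  have h1k : (0:ℝ) < 1 + k := by linarith
  have hsk : Real.sqrt k < 1 := by
    rw [show (1:ℝ) = Real.sqrt 1 by simp]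
    exact Real.sqrt_lt_sqrt hk0 hk1
  set k₁ : ℝ := 2 * Real.sqrt k / (1 + k) with hk₁def
  have hk₁0 : 0 ≤ k₁ := by positivity
  have hk₁1 : k₁ < 1 := by
    rw [hk₁def, div_lt_one h1k]
    nlinarith [Real.sq_sqrt hk0, mul_pos (sub_pos.2 hsk) (sub_pos.2 hsk)]
  have hk₁sq : k₁^2 = 4*k/(1+k)^2 := by
    rw [hk₁def, div_pow, mul_pow, Real.sq_sqrt hk0]; ring
  set g : ℝ → ℝ := fun θ => Real.arcsin ((1+k) * Real.sin θ / (1 + k * Real.sin θ^2)) with hgdef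
  set F : ℝ → ℝ := fun b =>
      2*(∫ θ in (0:ℝ)..b, Real.sqrt (1 - k^2 * Real.sin θ ^ 2))
      - (1-k^2)*(∫ θ in (0:ℝ)..b, 1 / Real.sqrt (1 - k^2 * Real.sin θ ^ 2))
      - (1+k)*(∫ φ in (0:ℝ)..(g b), Real.sqrt (1 - k₁^2 * Real.sin φ ^ 2))
      + 2*k*Real.sin b*Real.cos b*Real.sqrt (1 - k^2 * Real.sin b ^ 2)/(1 + k * Real.sin b^2)
    with hFdef
  have hD : ∀ θ : ℝ, 0 < 1 + k * Real.sin θ ^ 2 := fun θ => by nlinarith [sq_nonneg (Real.sin θ)]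
  -- continuity of F
  have hg_cont : Continuous g := by
    apply Real.continuous_arcsin.comp
    exact (continuous_const.mul Real.continuous_sin).div
      (continuous_const.add (continuous_const.mul (Real.continuous_sin.pow 2)))
      (fun θ => (hD θ).ne')
  have hF_cont : Continuous F := by
    rw [hFdef]
    apply Continuous.add
    · apply Continuous.sub
      · apply Continuous.sub
        · exact continuous_const.mul
            (intervalIntegral.continuous_primitive (fun a b => (contE k).intervalIntegrable a b) 0)
        · exact continuous_const.mul
            (intervalIntegral.continuous_primitive
              (fun a b => (contK hk0 hk1).intervalIntegrable a b) 0)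
      · exact continuous_const.mul
          ((intervalIntegral.continuous_primitive
            (fun a b => (contE k₁).intervalIntegrable a b) 0).comp hg_cont)
    · apply Continuous.div
      · fun_prop
      · fun_prop
      · exact fun b => (hD b).ne'
  have hg0 : g 0 = 0 := by simp [hgdef]
  have hgπ : g (π/2) = π/2 := by
    rw [hgdef]
    simp only [Real.sin_pi_div_two, one_pow, mul_one]
    rw [div_self h1k.ne', Real.arcsin_one]
  have hF0 : F 0 = 0 := by
    simp [hFdef, hg0]
  -- the derivative vanishes on [0, π/2)
  have hderiv : ∀ x ∈ Set.Ico (0:ℝ) (π/2), HasDerivAt F 0 x := by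
    intro x hx
    obtain ⟨hx0, hxπ⟩ := hx
    set s := Real.sin x with hsdef
    set c := Real.cos x with hcdef
    have hs0 : 0 ≤ s := Real.sin_nonneg_of_nonneg_of_le_pi hx0 (by linarith [Real.pi_pos])
    have hs1 : s < 1 := by
      have := Real.strictMonoOn_sin (a := x) (b := π/2)
        ⟨by linarith [Real.pi_pos], hxπ.le⟩ ⟨by linarith [Real.pi_pos], le_refl _⟩ hxπ
      simpa using this
    have hc0 : 0 < c := Real.cos_pos_of_mem_Ioo ⟨by linarith [Real.pi_pos], hxπ⟩
    have hc2 : c^2 = 1 - s^2 := Real.cos_sq' x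
    set Δ := Real.sqrt (1 - k^2 * s^2) with hΔdef
    have hΔpos : 0 < Δ := Real.sqrt_pos.2 (den_pos hk0 hk1 x)
    have hΔ2 : Δ^2 = 1 - k^2*s^2 := Real.sq_sqrt (den_pos hk0 hk1 x).le
    have hDx : 0 < 1 + k*s^2 := hD x
    have hks2 : k*s^2 < 1 := by nlinarith
    set y := (1+k)*s/(1+k*s^2) with hydef
    have hy0 : 0 ≤ y := by positivity
    have hy1 : y < 1 := by
      rw [hydef, div_lt_one hDx]
      nlinarith [mul_pos (sub_pos.2 hs1) (show 0 < 1 - k*s by nlinarith)]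
    -- pieces of derivative
    have hsin : HasDerivAt Real.sin c x := Real.hasDerivAt_sin x
    have hcos : HasDerivAt Real.cos (-s) x := Real.hasDerivAt_cos x
    have hs2' : HasDerivAt (fun b => Real.sin b ^ 2) (2*s*c) x := by
      have := hsin.pow 2
      refine this.congr_deriv ?_
      simp [hsdef]
    have hden : HasDerivAt (fun b => 1 + k * Real.sin b ^ 2) (k*(2*s*c)) x :=
      (hs2'.const_mul k).const_add 1
    have hy' : HasDerivAt (fun b => (1+k) * Real.sin b / (1 + k * Real.sin b^2))
        (((1+k)*c*(1+k*s^2) - (1+k)*s*(k*(2*s*c)))/(1+k*s^2)^2) x :=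
      (hsin.const_mul (1+k)).div hden hDx.ne'
    have hy2 : Real.sqrt (1 - y^2) = c*Δ/(1+k*s^2) := by
      rw [show 1 - y^2 = (c*Δ/(1+k*s^2))^2 by
        rw [show (c*Δ/(1+k*s^2))^2 = (1-s^2)*(1-k^2*s^2)/(1+k*s^2)^2 by
          rw [div_pow, mul_pow, hc2, hΔ2], hydef]
        field_simp
        ring]
      exact Real.sqrt_sq (by positivity)
    have hg' : HasDerivAt g ((1+k)*(1-k*s^2)/((1+k*s^2)*Δ)) x := by
      have harc : HasDerivAt Real.arcsin (1/Real.sqrt (1-y^2)) y :=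
        Real.hasDerivAt_arcsin (by linarith) hy1.ne
      have h := harc.comp x hy'
      rw [hydef] at h
      refine h.congr_deriv ?_
      · rw [← hydef, hy2]
        field_simp
        ring
    -- FTC pieces
    have hIE : HasDerivAt (fun b => ∫ θ in (0:ℝ)..b, Real.sqrt (1 - k^2 * Real.sin θ ^ 2)) Δ x :=
      intervalIntegral.integral_hasDerivAt_right ((contE k).intervalIntegrable _ _)
        ((contE k).stronglyMeasurableAtFilter _ _) (contE k).continuousAt
    have hIK : HasDerivAt (fun b => ∫ θ in (0:ℝ)..b, 1 / Real.sqrt (1 - k^2 * Real.sin θ ^ 2))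
        (1/Δ) x :=
      intervalIntegral.integral_hasDerivAt_right ((contK hk0 hk1).intervalIntegrable _ _)
        ((contK hk0 hk1).stronglyMeasurableAtFilter _ _) (contK hk0 hk1).continuousAt
    have hIE₁ : HasDerivAt (fun u => ∫ φ in (0:ℝ)..u, Real.sqrt (1 - k₁^2 * Real.sin φ ^ 2))
        (Real.sqrt (1 - k₁^2 * Real.sin (g x) ^ 2)) (g x) :=
      intervalIntegral.integral_hasDerivAt_right ((contE k₁).intervalIntegrable _ _)
        ((contE k₁).stronglyMeasurableAtFilter _ _) (contE k₁).continuousAt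
    have hcomp : HasDerivAt (fun b => ∫ φ in (0:ℝ)..(g b), Real.sqrt (1 - k₁^2 * Real.sin φ ^ 2))
        (Real.sqrt (1 - k₁^2 * Real.sin (g x) ^ 2) * ((1+k)*(1-k*s^2)/((1+k*s^2)*Δ))) x :=
      hIE₁.comp x hg'
    have hsingx : Real.sin (g x) = y := by
      rw [hgdef]; exact Real.sin_arcsin (by linarith) hy1.le
    have hval₁ : Real.sqrt (1 - k₁^2 * Real.sin (g x) ^ 2) = (1-k*s^2)/(1+k*s^2) := by
      rw [hsingx, hk₁sq, hydef,
        show 1 - 4*k/(1+k)^2 * ((1+k)*s/(1+k*s^2))^2 = ((1-k*s^2)/(1+k*s^2))^2 by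
          field_simp; ring]
      exact Real.sqrt_sq (div_nonneg (by linarith) (by linarith))
    rw [hval₁] at hcomp
    -- derivative of the explicit term
    have hΔb : HasDerivAt (fun b => Real.sqrt (1 - k^2 * Real.sin b ^ 2))
        ((-(k^2*(2*s*c)))/(2*Δ)) x := by
      have h := ((hs2'.const_mul (k^2)).const_sub 1).sqrt (den_pos hk0 hk1 x).ne'
      convert h using 1
    have hP : HasDerivAt (fun b => 2*k*Real.sin b*Real.cos b*Real.sqrt (1 - k^2 * Real.sin b ^ 2))
        ((((2*k)*c)*c + ((2*k)*s)*(-s))*Δ + ((2*k)*s*c)*((-(k^2*(2*s*c)))/(2*Δ))) x := by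
      have h := (((hsin.const_mul (2*k)).mul hcos).mul hΔb)
      exact h.congr_deriv rfl
    have hA' : HasDerivAt
        (fun b => 2*k*Real.sin b*Real.cos b*Real.sqrt (1 - k^2 * Real.sin b ^ 2)/(1 + k*Real.sin b^2))
        ((((((2*k)*c)*c + ((2*k)*s)*(-s))*Δ + ((2*k)*s*c)*((-(k^2*(2*s*c)))/(2*Δ)))*(1+k*s^2)
          - (2*k*s*c*Δ)*(k*(2*s*c)))/(1+k*s^2)^2) x :=
      hP.div hden hDx.ne'
    -- combine
    have hFd := (((hIE.const_mul 2).sub (hIK.const_mul (1-k^2))).sub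
        (hcomp.const_mul (1+k))).add hA'
    rw [hFdef]
    refine hFd.congr_deriv ?_
    field_simp
    linear_combination (2*(1+k*s^2)^2 - 2*k*(1+k*s^2)*s^2 + (2*k*(1+k*s^2) - 4*k^2*s^2)*c^2) * hΔ2 + (-2*k^3*s^2*(1+k*s^2) + (2*k*(1+k*s^2) - 4*k^2*s^2)*(1-k^2*s^2)) * hc2
  -- conclude
  have key := constant_of_has_deriv_right_zero hF_cont.continuousOn
    (fun x hx => (hderiv x hx).hasDerivWithinAt) (π/2)
    ⟨by positivity, le_refl _⟩
  rw [hF0] at key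
  rw [hFdef] at key
  simp only [hgπ, Real.cos_pi_div_two, Real.sin_pi_div_two] at key
  have hE : ellE k = ∫ θ in (0:ℝ)..(π/2), Real.sqrt (1 - k^2 * Real.sin θ ^ 2) := rfl
  have hK : ellK k = ∫ θ in (0:ℝ)..(π/2), 1 / Real.sqrt (1 - k^2 * Real.sin θ ^ 2) := rfl
  have hE₁ : ellE k₁ = ∫ φ in (0:ℝ)..(π/2), Real.sqrt (1 - k₁^2 * Real.sin φ ^ 2) := rfl
  rw [← hE, ← hK, ← hE₁] at key
  simp only [mul_zero, zero_mul, mul_one, zero_div, add_zero] at key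
  linarith [key]

theorem stmt_2 : ∀ x : ℝ, x ∈ Set.Icc (0:ℝ) 1 →
    ellE x = ((1 + x) / 2) * ellE (2 * Real.sqrt x / (1 + x)) + ((1 - x^2) / 2) * ellK x := by
  intro x hx
  obtain ⟨hx0, hx1⟩ := hx
  rcases lt_or_eq_of_le hx1 with h | h
  · exact landen_s2 x hx0 h
  · subst h
    norm_num
end

section
/- For every integer n ≥ 0, ∫₀¹ xⁿ K'(x) dx = (π/4) · Γ((n+1)/2)² / Γ((n+2)/2)². -/
open Real intervalIntegral

open MeasureTheory Set

lemma sin_lt_one' {θ : ℝ} (h0 : 0 ≤ θ) (h1 : θ < π/2) : Real.sin θ < 1 := by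
  have := Real.strictMonoOn_sin ⟨by linarith [pi_pos], h1.le⟩
    ⟨by linarith [pi_pos], le_refl _⟩ h1
  simpa using this

lemma sin_image : Real.sin '' Ioo 0 (π/2) = Ioo (0:ℝ) 1 := by
  ext s
  constructor
  · rintro ⟨θ, ⟨h0, h1⟩, rfl⟩
    exact ⟨Real.sin_pos_of_pos_of_lt_pi h0 (h1.trans (by linarith [pi_pos])), sin_lt_one' h0.le h1⟩
  · rintro ⟨h0, h1⟩
    exact ⟨Real.arcsin s, ⟨Real.arcsin_pos.2 h0, Real.arcsin_lt_pi_div_two.2 h1⟩,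
      Real.sin_arcsin (by linarith) h1.le⟩

lemma sin_injOn : InjOn Real.sin (Ioo 0 (π/2)) :=
  Real.strictMonoOn_sin.injOn.mono
    (Ioo_subset_Icc_self.trans (Icc_subset_Icc (by linarith [pi_pos]) le_rfl))

-- Lemma A
lemma ellK'_eq (x : ℝ) (hx : x ∈ Ioo (0:ℝ) 1) :
    ellK' x = ∫ s in Ioo (0:ℝ) 1, 1 / Real.sqrt ((1 - s^2) * (1 - (1-x^2) * s^2)) := by
  obtain ⟨hx0, hx1⟩ := hx
  have hc0 : (0:ℝ) ≤ 1 - x^2 := by nlinarith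
  have hKrw : ellK' x = ∫ θ in (0:ℝ)..(π/2), 1 / Real.sqrt (1 - (1-x^2) * Real.sin θ ^ 2) := by
    simp only [ellK', ellK, Real.sq_sqrt hc0]
  rw [hKrw, intervalIntegral.integral_of_le (by positivity), integral_Ioc_eq_integral_Ioo,
    ← sin_image, integral_image_eq_integral_abs_deriv_smul measurableSet_Ioo
      (fun θ _ => (Real.hasDerivAt_sin θ).hasDerivWithinAt) sin_injOn]
  refine (setIntegral_congr_fun measurableSet_Ioo (fun θ ⟨h0, h1⟩ => ?_)).symm
  have hcos : 0 < Real.cos θ := Real.cos_pos_of_mem_Ioo ⟨by linarith [pi_pos], h1⟩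
  have h1s : 1 - Real.sin θ ^ 2 = Real.cos θ ^ 2 := (Real.cos_sq' θ).symm
  rw [smul_eq_mul, h1s, Real.sqrt_mul (sq_nonneg _), Real.sqrt_sq hcos.le,
    abs_of_pos hcos]
  rw [mul_one_div, ← div_div, div_self hcos.ne']

-- pointwise computation reused
lemma ptA {c : ℝ} {θ : ℝ} (hθ : θ ∈ Ioo 0 (π/2)) :
    |Real.cos θ| • (1 / Real.sqrt ((1 - Real.sin θ^2) * (1 - c * Real.sin θ^2)))
      = 1 / Real.sqrt (1 - c * Real.sin θ^2) := by
  obtain ⟨h0, h1⟩ := hθ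
  have hcos : 0 < Real.cos θ := Real.cos_pos_of_mem_Ioo ⟨by linarith [pi_pos], h1⟩
  have h1s : 1 - Real.sin θ ^ 2 = Real.cos θ ^ 2 := (Real.cos_sq' θ).symm
  rw [smul_eq_mul, h1s, Real.sqrt_mul (sq_nonneg _), Real.sqrt_sq hcos.le,
    abs_of_pos hcos, mul_one_div, ← div_div, div_self hcos.ne']

lemma contA {c : ℝ} (hc : c < 1) :
    Continuous (fun θ : ℝ => 1 / Real.sqrt (1 - c * Real.sin θ^2)) := by
  refine continuous_const.div (Real.continuous_sqrt.comp (by continuity)) (fun θ => ?_)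
  have hs : 0 ≤ Real.sin θ ^ 2 := sq_nonneg _
  have hs1 : Real.sin θ ^ 2 ≤ 1 := by
    have := Real.neg_one_le_sin θ; have := Real.sin_le_one θ; nlinarith
  have : 0 < 1 - c * Real.sin θ^2 := by
    rcases le_or_gt c 0 with h | h
    · nlinarith
    · nlinarith
  positivity

lemma g_integrable {x : ℝ} (hx : x ∈ Ioo (0:ℝ) 1) :
    IntegrableOn (fun s => 1 / Real.sqrt ((1 - s^2) * (1 - (1-x^2) * s^2))) (Ioo (0:ℝ) 1) := by
  obtain ⟨hx0, hx1⟩ := hx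
  have hc : 1 - x^2 < 1 := by nlinarith
  rw [show Ioo (0:ℝ) 1 = Real.sin '' Ioo 0 (π/2) from sin_image.symm,
    integrableOn_image_iff_integrableOn_abs_deriv_smul measurableSet_Ioo
      (fun θ _ => (Real.hasDerivAt_sin θ).hasDerivWithinAt) sin_injOn]
  refine IntegrableOn.congr_fun ?_ (fun θ hθ => (ptA hθ).symm) measurableSet_Ioo
  exact ((contA hc).integrableOn_Icc).mono_set Ioo_subset_Icc_self

section LemB
variable {x : ℝ} (hx0 : 0 < x) (hx1 : x < 1)

lemma r_pos (hx1 : x < 1) (hx0 : 0 < x) : 0 < Real.sqrt (1 - x^2) :=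
  Real.sqrt_pos.2 (by nlinarith)

lemma cos_image (hx0 : 0 < x) (hx1 : x < 1) :
    (fun θ => (Real.sqrt (1-x^2))⁻¹ * Real.cos θ) '' Ioo (Real.arcsin x) (π/2) = Ioo (0:ℝ) 1 := by
  set r := Real.sqrt (1-x^2) with hr
  have hrpos : 0 < r := r_pos hx1 hx0
  have hr1 : r ≤ 1 := Real.sqrt_le_one.2 (by nlinarith)
  have hax0 : 0 < Real.arcsin x := Real.arcsin_pos.2 hx0
  have hax2 : Real.arcsin x < π/2 := Real.arcsin_lt_pi_div_two.2 hx1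
  have hcosax : Real.cos (Real.arcsin x) = r := Real.cos_arcsin x
  ext u
  constructor
  · rintro ⟨θ, ⟨h0, h1⟩, rfl⟩
    have hθ0 : 0 < θ := hax0.trans h0
    have hcθ : 0 < Real.cos θ := Real.cos_pos_of_mem_Ioo ⟨by linarith [pi_pos], h1⟩
    have hlt : Real.cos θ < r := by
      rw [← hcosax]
      exact Real.strictAntiOn_cos ⟨hax0.le, by linarith [pi_pos]⟩
        ⟨hθ0.le, by linarith [pi_pos]⟩ h0
    constructor
    · positivity
    · rw [inv_mul_lt_iff₀ hrpos]  -- maybe name differs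
      simpa using hlt
  · rintro ⟨hu0, hu1⟩
    have hru0 : 0 < r * u := by positivity
    have hru1 : r * u < r := by nlinarith
    have hru1' : r * u ≤ 1 := by nlinarith
    refine ⟨Real.arccos (r * u), ⟨?_, Real.arccos_lt_pi_div_two.2 hru0⟩, ?_⟩
    · have hc : Real.cos (Real.arccos (r*u)) < Real.cos (Real.arcsin x) := by
        rw [Real.cos_arccos (by linarith) hru1', hcosax]; exact hru1
      have := Real.strictAntiOn_cos.lt_iff_gt (b := Real.arcsin x) (a := Real.arccos (r*u))
        ⟨Real.arccos_nonneg _, Real.arccos_le_pi _⟩ ⟨hax0.le, by linarith [pi_pos]⟩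
      exact this.1 hc
    · show r⁻¹ * Real.cos (Real.arccos (r * u)) = u
      rw [Real.cos_arccos (by linarith) hru1', inv_mul_cancel_left₀ hrpos.ne']

end LemB

section LemB2
variable {x : ℝ}

lemma cos_injOn' (hx0 : 0 < x) (hx1 : x < 1) :
    InjOn (fun θ => (Real.sqrt (1-x^2))⁻¹ * Real.cos θ) (Ioo (Real.arcsin x) (π/2)) := by
  have hrpos : 0 < Real.sqrt (1-x^2) := r_pos hx1 hx0
  have hax0 : 0 < Real.arcsin x := Real.arcsin_pos.2 hx0
  have hsub : Ioo (Real.arcsin x) (π/2) ⊆ Icc 0 π := fun θ hθ =>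
    ⟨(hax0.trans hθ.1).le, by have := hθ.2; linarith [pi_pos]⟩
  intro a ha b hb h
  exact Real.strictAntiOn_cos.injOn (hsub ha) (hsub hb)
    (mul_left_cancel₀ (inv_ne_zero hrpos.ne') h)

lemma sin_gt (hx0 : 0 < x) (hx1 : x < 1) {θ : ℝ} (hθ : θ ∈ Ioo (Real.arcsin x) (π/2)) :
    x < Real.sin θ := by
  have h := Real.strictMonoOn_sin
    ⟨Real.arcsin_mem_Icc x |>.1, (Real.arcsin_mem_Icc x).2⟩
    ⟨by have := (Real.arcsin_mem_Icc x).1; have := hθ.1; linarith, hθ.2.le⟩ hθ.1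
  rwa [Real.sin_arcsin (by linarith) hx1.le] at h

lemma ptB (hx0 : 0 < x) (hx1 : x < 1) {θ : ℝ} (hθ : θ ∈ Ioo (Real.arcsin x) (π/2)) :
    |(Real.sqrt (1-x^2))⁻¹ * (-Real.sin θ)| •
      (1 / Real.sqrt ((1 - ((Real.sqrt (1-x^2))⁻¹ * Real.cos θ)^2) *
        (1 - (1-x^2) * ((Real.sqrt (1-x^2))⁻¹ * Real.cos θ)^2)))
      = 1 / Real.sqrt (Real.sin θ^2 - x^2) := by
  set r := Real.sqrt (1-x^2) with hr
  have hrpos : 0 < r := r_pos hx1 hx0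
  have hr2 : r^2 = 1 - x^2 := Real.sq_sqrt (by nlinarith)
  have hsθ : 0 < Real.sin θ := hx0.trans (sin_gt hx0 hx1 hθ)
  have hD : 0 < Real.sin θ^2 - x^2 := by nlinarith [sin_gt hx0 hx1 hθ]
  have hne : (1:ℝ) - x^2 ≠ 0 := by nlinarith
  have e2 : 1 - (1-x^2) * (r⁻¹ * Real.cos θ)^2 = Real.sin θ^2 := by
    rw [mul_pow, inv_pow, hr2, mul_inv_cancel_left₀ hne]
    exact (Real.sin_sq θ).symm
  have e1 : 1 - (r⁻¹ * Real.cos θ)^2 = (Real.sin θ^2 - x^2) / r^2 := by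
    have h' : (r⁻¹ * Real.cos θ)^2 = Real.cos θ^2 / (1-x^2) := by
      rw [mul_pow, inv_pow, hr2]; ring
    rw [h', Real.cos_sq', hr2]
    field_simp; ring
  rw [e1, e2]
  have eprod : (Real.sin θ^2 - x^2) / r^2 * Real.sin θ^2
      = (Real.sin θ / r)^2 * (Real.sin θ^2 - x^2) := by field_simp
  rw [eprod, Real.sqrt_mul (sq_nonneg _), Real.sqrt_sq (by positivity)]
  rw [smul_eq_mul, abs_mul, abs_inv, abs_of_pos hrpos, abs_neg, abs_of_pos hsθ]
  have hsq : Real.sqrt (Real.sin θ^2 - x^2) ≠ 0 := by positivity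
  field_simp

lemma B_eq (hx0 : 0 < x) (hx1 : x < 1) :
    (∫ s in Ioo (0:ℝ) 1, 1 / Real.sqrt ((1 - s^2) * (1 - (1-x^2) * s^2)))
      = ∫ θ in Ioo (Real.arcsin x) (π/2), 1 / Real.sqrt (Real.sin θ^2 - x^2) := by
  rw [show Ioo (0:ℝ) 1 = _ from (cos_image hx0 hx1).symm,
    integral_image_eq_integral_abs_deriv_smul measurableSet_Ioo
      (fun θ _ => (((Real.hasDerivAt_cos θ).const_mul (Real.sqrt (1-x^2))⁻¹)).hasDerivWithinAt)
      (cos_injOn' hx0 hx1)]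
  exact setIntegral_congr_fun measurableSet_Ioo (fun θ hθ => ptB hx0 hx1 hθ)

lemma B_int (hx0 : 0 < x) (hx1 : x < 1) :
    IntegrableOn (fun θ => 1 / Real.sqrt (Real.sin θ^2 - x^2)) (Ioo (Real.arcsin x) (π/2)) := by
  have h := (integrableOn_image_iff_integrableOn_abs_deriv_smul measurableSet_Ioo
      (fun θ (_ : θ ∈ Ioo (Real.arcsin x) (π/2)) =>
        (((Real.hasDerivAt_cos θ).const_mul (Real.sqrt (1-x^2))⁻¹)).hasDerivWithinAt)
      (cos_injOn' hx0 hx1)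
      (fun s => 1 / Real.sqrt ((1 - s^2) * (1 - (1-x^2) * s^2)))).1
  rw [cos_image hx0 hx1] at h
  have h2 := h (g_integrable ⟨hx0, hx1⟩)
  exact (IntegrableOn.congr_fun h2 (fun θ hθ => ptB hx0 hx1 hθ) measurableSet_Ioo)

end LemB2

section LemC
noncomputable def Wn (n : ℕ) : ℝ := ∫ θ in (0:ℝ)..(π/2), Real.sin θ ^ n

lemma csin_image {c : ℝ} (hc : 0 < c) :
    (fun φ => c * Real.sin φ) '' Ioo 0 (π/2) = Ioo (0:ℝ) c := by
  have : (fun φ => c * Real.sin φ) = (fun s => c * s) ∘ Real.sin := rfl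
  rw [this, Set.image_comp, sin_image]
  ext u
  constructor
  · rintro ⟨s, ⟨h0, h1⟩, rfl⟩
    exact ⟨by positivity, mul_lt_of_lt_one_right hc h1⟩
  · rintro ⟨h0, h1⟩
    exact ⟨u / c, ⟨by positivity, by rw [div_lt_one hc]; exact h1⟩,
      by field_simp⟩

lemma csin_injOn {c : ℝ} (hc : 0 < c) :
    InjOn (fun φ => c * Real.sin φ) (Ioo 0 (π/2)) :=
  fun a ha b hb h => sin_injOn ha hb (mul_left_cancel₀ hc.ne' h)

lemma ptC {θ : ℝ} (hθ : θ ∈ Ioo 0 (π/2)) {φ : ℝ} (hφ : φ ∈ Ioo 0 (π/2)) (n : ℕ) :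
    |Real.sin θ * Real.cos φ| •
      ((Real.sin θ * Real.sin φ)^n / Real.sqrt (Real.sin θ^2 - (Real.sin θ * Real.sin φ)^2))
      = Real.sin θ^n * Real.sin φ^n := by
  have hsθ : 0 < Real.sin θ := Real.sin_pos_of_pos_of_lt_pi hθ.1 (hθ.2.trans (by linarith [pi_pos]))
  have hcφ : 0 < Real.cos φ := Real.cos_pos_of_mem_Ioo ⟨by linarith [pi_pos, hφ.1], hφ.2⟩
  have e : Real.sin θ^2 - (Real.sin θ * Real.sin φ)^2 = (Real.sin θ * Real.cos φ)^2 := by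
    rw [mul_pow, mul_pow, Real.cos_sq']; ring
  rw [e, Real.sqrt_sq (by positivity), smul_eq_mul, abs_of_pos (by positivity)]
  rw [mul_comm (Real.sin θ * Real.cos φ),
    div_mul_cancel₀ _ (by positivity : (0:ℝ) < Real.sin θ * Real.cos φ).ne', mul_pow]

lemma intC {θ : ℝ} (hθ : θ ∈ Ioo 0 (π/2)) (n : ℕ) :
    (∫ x in Ioo 0 (Real.sin θ), x^n / Real.sqrt (Real.sin θ^2 - x^2))
      = Real.sin θ^n * Wn n ∧
    IntegrableOn (fun x => x^n / Real.sqrt (Real.sin θ^2 - x^2)) (Ioo 0 (Real.sin θ)) := by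
  have hsθ : 0 < Real.sin θ := Real.sin_pos_of_pos_of_lt_pi hθ.1 (hθ.2.trans (by linarith [pi_pos]))
  have himg := csin_image hsθ
  have hderiv : ∀ φ ∈ Ioo 0 (π/2), HasDerivWithinAt (fun φ => Real.sin θ * Real.sin φ)
      (Real.sin θ * Real.cos φ) (Ioo 0 (π/2)) φ :=
    fun φ _ => ((Real.hasDerivAt_sin φ).const_mul (Real.sin θ)).hasDerivWithinAt
  constructor
  · rw [← himg, integral_image_eq_integral_abs_deriv_smul measurableSet_Ioo hderiv
      (csin_injOn hsθ)]
    rw [setIntegral_congr_fun measurableSet_Ioo (fun φ hφ => ptC hθ hφ n)]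
    rw [MeasureTheory.integral_const_mul]
    congr 1
    rw [Wn, intervalIntegral.integral_of_le (by positivity), integral_Ioc_eq_integral_Ioo]
  · rw [← himg, integrableOn_image_iff_integrableOn_abs_deriv_smul measurableSet_Ioo hderiv
      (csin_injOn hsθ)]
    refine IntegrableOn.congr_fun ?_ (fun φ hφ => (ptC hθ hφ n).symm) measurableSet_Ioo
    exact ((continuous_const.mul ((Real.continuous_sin).pow n)).integrableOn_Icc).mono_set
      Ioo_subset_Icc_self

end LemC

noncomputable def Rn (n : ℕ) : ℝ :=
  (π / 4) * Real.Gamma ((n + 1) / 2) ^ 2 / Real.Gamma ((n + 2) / 2) ^ 2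

lemma Wn_step (k : ℕ) : Wn (k + 2) = (k + 1) / (k + 2) * Wn k := by
  unfold Wn
  rw [integral_sin_pow k]
  simp

lemma Rn_step (k : ℕ) : Rn (k + 2) = ((k + 1) / (k + 2)) ^ 2 * Rn k := by
  unfold Rn
  have h1 : ((k : ℝ) + 2 + 1) / 2 = ((k : ℝ) + 1) / 2 + 1 := by ring
  have h2 : ((k : ℝ) + 2 + 2) / 2 = ((k : ℝ) + 2) / 2 + 1 := by ring
  have g1 : Real.Gamma (((k : ℝ) + 1) / 2 + 1) = ((k : ℝ) + 1) / 2 * Real.Gamma (((k : ℝ) + 1) / 2) :=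
    Real.Gamma_add_one (by positivity)
  have g2 : Real.Gamma (((k : ℝ) + 2) / 2 + 1) = ((k : ℝ) + 2) / 2 * Real.Gamma (((k : ℝ) + 2) / 2) :=
    Real.Gamma_add_one (by positivity)
  have hΓ : Real.Gamma (((k : ℝ) + 2) / 2) ≠ 0 :=
    (Real.Gamma_pos_of_pos (by positivity)).ne'
  push_cast
  rw [h1, h2, g1, g2]
  have hk2 : ((k : ℝ) + 2) ≠ 0 := by positivity
  field_simp

lemma Wn_zero : Wn 0 ^ 2 = Rn 0 := by
  unfold Wn Rn
  have h : ((0:ℕ) + 1 : ℝ) / 2 = 1/2 := by norm_num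
  have h2 : ((0:ℕ) + 2 : ℝ) / 2 = 1 := by norm_num
  rw [h, h2, Real.Gamma_one, Real.Gamma_one_half_eq]
  rw [Real.sq_sqrt pi_pos.le]
  simp
  ring

lemma Wn_one : Wn 1 ^ 2 = Rn 1 := by
  unfold Wn Rn
  have h : ((1:ℕ) + 1 : ℝ) / 2 = 1 := by norm_num
  have h2 : ((1:ℕ) + 2 : ℝ) / 2 = 1/2 + 1 := by norm_num
  rw [h, h2, Real.Gamma_one, Real.Gamma_add_one (by norm_num), Real.Gamma_one_half_eq]
  simp [integral_sin]
  rw [mul_pow, Real.sq_sqrt pi_pos.le]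
  field_simp
  ring

lemma Wn_sq (n : ℕ) : Wn n ^ 2 = Rn n := by
  have H : ∀ m : ℕ, Wn m ^ 2 = Rn m ∧ Wn (m + 1) ^ 2 = Rn (m + 1) := by
    intro m
    induction m with
    | zero => exact ⟨Wn_zero, Wn_one⟩
    | succ k ih =>
      exact ⟨ih.2, by rw [Wn_step k, Rn_step k, mul_pow, ih.1]⟩
  exact (H n).1

section Assembly

noncomputable def kk (n : ℕ) (p : ℝ × ℝ) : ENNReal :=
  if p.1 < Real.sin p.2 then ENNReal.ofReal (p.1^n / Real.sqrt (Real.sin p.2^2 - p.1^2)) else 0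

lemma kk_meas (n : ℕ) : Measurable (kk n) := by
  unfold kk
  refine Measurable.ite (measurableSet_lt measurable_fst
    (Real.continuous_sin.measurable.comp measurable_snd)) ?_ measurable_const
  refine ENNReal.measurable_ofReal.comp (Measurable.div (measurable_fst.pow_const n) ?_)
  exact Real.continuous_sqrt.measurable.comp
    (((Real.continuous_sin.measurable.comp measurable_snd).pow_const 2).sub
      (measurable_fst.pow_const 2))

lemma ellK'_nonneg (x : ℝ) : 0 ≤ ellK' x := by
  unfold ellK' ellK
  apply intervalIntegral.integral_nonneg (by positivity)
  intro θ _
  positivity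

lemma Wn_nonneg (n : ℕ) : 0 ≤ Wn n := by
  apply intervalIntegral.integral_nonneg (by positivity)
  intro θ hθ
  exact pow_nonneg (Real.sin_nonneg_of_nonneg_of_le_pi hθ.1
    (hθ.2.trans (by linarith [pi_pos]))) n

-- step 1: inner lintegral over θ
lemma step1 (n : ℕ) {x : ℝ} (hx : x ∈ Ioo (0:ℝ) 1) :
    ∫⁻ θ in Ioo 0 (π/2), kk n (x, θ) = ENNReal.ofReal (x^n * ellK' x) := by
  obtain ⟨hx0, hx1⟩ := hx
  have hax0 : 0 < Real.arcsin x := Real.arcsin_pos.2 hx0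
  have hax2 : Real.arcsin x < π/2 := Real.arcsin_lt_pi_div_two.2 hx1
  have hsub : Ioo (Real.arcsin x) (π/2) ⊆ Ioo 0 (π/2) :=
    fun θ hθ => ⟨hax0.trans hθ.1, hθ.2⟩
  have hptw : ∀ θ ∈ Ioo 0 (π/2), kk n (x, θ)
      = (Ioo (Real.arcsin x) (π/2)).indicator
          (fun θ => ENNReal.ofReal (x^n / Real.sqrt (Real.sin θ^2 - x^2))) θ := by
    intro θ hθ
    have hiff : x < Real.sin θ ↔ Real.arcsin x < θ := by
      constructor
      · intro h
        have := Real.strictMonoOn_sin (Real.arcsin_mem_Icc x)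
          ⟨by linarith [hθ.1, pi_pos], hθ.2.le⟩
        rw [Real.sin_arcsin (by linarith) hx1.le] at this
        by_contra hc
        push_neg at hc
        rcases eq_or_lt_of_le hc with rfl | hlt
        · rw [Real.sin_arcsin (by linarith) hx1.le] at h; exact lt_irrefl _ h
        · have := Real.strictMonoOn_sin ⟨by linarith [hθ.1, pi_pos], hθ.2.le⟩
            (Real.arcsin_mem_Icc x) hlt
          rw [Real.sin_arcsin (by linarith) hx1.le] at this
          linarith
      · intro h
        exact sin_gt hx0 hx1 ⟨h, hθ.2⟩
    simp only [kk]
    by_cases h : x < Real.sin θ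
    · rw [if_pos h, Set.indicator_of_mem (mem_Ioo.2 ⟨hiff.1 h, hθ.2⟩)]
    · rw [if_neg h, Set.indicator_of_notMem]
      intro hmem
      exact h (hiff.2 hmem.1)
  rw [setLIntegral_congr_fun measurableSet_Ioo
    hptw]
  rw [lintegral_indicator measurableSet_Ioo, Measure.restrict_restrict measurableSet_Ioo,
    Set.inter_eq_self_of_subset_left hsub]
  have hInt : IntegrableOn (fun θ => x^n / Real.sqrt (Real.sin θ^2 - x^2))
      (Ioo (Real.arcsin x) (π/2)) := by
    have := (B_int hx0 hx1).const_mul (x^n)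
    exact IntegrableOn.congr_fun this (fun θ _ => mul_one_div _ _) measurableSet_Ioo
  rw [← ofReal_integral_eq_lintegral_ofReal hInt
    (Filter.Eventually.of_forall (fun θ => by positivity))]
  congr 1
  have : (∫ θ in Ioo (Real.arcsin x) (π/2), x^n / Real.sqrt (Real.sin θ^2 - x^2))
      = x^n * ∫ θ in Ioo (Real.arcsin x) (π/2), 1 / Real.sqrt (Real.sin θ^2 - x^2) := by
    rw [← MeasureTheory.integral_const_mul]
    exact setIntegral_congr_fun measurableSet_Ioo (fun θ _ => by rw [mul_one_div])
  rw [this, ← B_eq hx0 hx1, ← ellK'_eq x ⟨hx0, hx1⟩]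

-- step 2: inner lintegral over x
lemma step2 (n : ℕ) {θ : ℝ} (hθ : θ ∈ Ioo 0 (π/2)) :
    ∫⁻ x in Ioo 0 1, kk n (x, θ) = ENNReal.ofReal (Real.sin θ^n * Wn n) := by
  have hsθ : 0 < Real.sin θ :=
    Real.sin_pos_of_pos_of_lt_pi hθ.1 (hθ.2.trans (by linarith [pi_pos]))
  have hs1 : Real.sin θ ≤ 1 := Real.sin_le_one θ
  have hsub : Ioo 0 (Real.sin θ) ⊆ Ioo (0:ℝ) 1 := fun x hx => ⟨hx.1, lt_of_lt_of_le hx.2 hs1⟩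
  have hptw : ∀ x ∈ Ioo (0:ℝ) 1, kk n (x, θ)
      = (Ioo 0 (Real.sin θ)).indicator
          (fun x => ENNReal.ofReal (x^n / Real.sqrt (Real.sin θ^2 - x^2))) x := by
    intro x hx
    simp only [kk]
    by_cases h : x < Real.sin θ
    · rw [if_pos h, Set.indicator_of_mem (mem_Ioo.2 ⟨hx.1, h⟩)]
    · rw [if_neg h, Set.indicator_of_notMem (fun hmem => h hmem.2)]
  rw [setLIntegral_congr_fun measurableSet_Ioo hptw]
  rw [lintegral_indicator measurableSet_Ioo, Measure.restrict_restrict measurableSet_Ioo,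
    Set.inter_eq_self_of_subset_left hsub]
  have hnn2 : 0 ≤ᵐ[volume.restrict (Ioo 0 (Real.sin θ))]
      fun x => x^n / Real.sqrt (Real.sin θ^2 - x^2) := by
    filter_upwards [ae_restrict_mem measurableSet_Ioo] with x hx
    have hx0 : 0 < x := hx.1
    positivity
  rw [← ofReal_integral_eq_lintegral_ofReal (intC hθ n).2 hnn2]
  rw [(intC hθ n).1]

end Assembly

lemma Wn_Ioo (n : ℕ) : Wn n = ∫ θ in Ioo 0 (π/2), Real.sin θ ^ n := by
  rw [Wn, intervalIntegral.integral_of_le (by positivity), integral_Ioc_eq_integral_Ioo]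

lemma main (n : ℕ) : (∫ x in (0:ℝ)..1, x ^ n * ellK' x) = Wn n ^ 2 := by
  have hM : Measurable (fun x => ∫⁻ θ in Ioo 0 (π/2), kk n (x, θ)) :=
    (kk_meas n).lintegral_prod_right'
  rw [intervalIntegral.integral_of_le zero_le_one, integral_Ioc_eq_integral_Ioo]
  have hcong : (∫ x in Ioo (0:ℝ) 1, x^n * ellK' x)
      = ∫ x in Ioo (0:ℝ) 1, (∫⁻ θ in Ioo 0 (π/2), kk n (x, θ)).toReal :=
    setIntegral_congr_fun measurableSet_Ioo (fun x hx => by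
      rw [step1 n hx, ENNReal.toReal_ofReal
        (mul_nonneg (pow_nonneg hx.1.le n) (ellK'_nonneg x))])
  rw [hcong, integral_eq_lintegral_of_nonneg_ae
    (Filter.Eventually.of_forall (fun x => ENNReal.toReal_nonneg))
    hM.ennreal_toReal.aestronglyMeasurable]
  have h1 : (∫⁻ x in Ioo (0:ℝ) 1,
        ENNReal.ofReal ((∫⁻ θ in Ioo 0 (π/2), kk n (x, θ)).toReal))
      = ∫⁻ x in Ioo (0:ℝ) 1, ∫⁻ θ in Ioo 0 (π/2), kk n (x, θ) :=
    setLIntegral_congr_fun measurableSet_Ioo (fun x hx => by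
      rw [step1 n hx, ENNReal.ofReal_toReal ENNReal.ofReal_ne_top])
  rw [h1]
  have h2 : (∫⁻ x in Ioo (0:ℝ) 1, ∫⁻ θ in Ioo 0 (π/2), kk n (x, θ))
      = ∫⁻ θ in Ioo 0 (π/2), ∫⁻ x in Ioo (0:ℝ) 1, kk n (x, θ) :=
    lintegral_lintegral_swap (kk_meas n).aemeasurable
  rw [h2]
  have h3 : (∫⁻ θ in Ioo 0 (π/2), ∫⁻ x in Ioo (0:ℝ) 1, kk n (x, θ))
      = ∫⁻ θ in Ioo 0 (π/2), ENNReal.ofReal (Real.sin θ^n * Wn n) :=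
    setLIntegral_congr_fun measurableSet_Ioo
      (fun θ hθ => step2 n hθ)
  rw [h3]
  have hInt : IntegrableOn (fun θ => Real.sin θ^n * Wn n) (Ioo 0 (π/2)) :=
    (((Real.continuous_sin.pow n).mul continuous_const).integrableOn_Icc).mono_set
      Ioo_subset_Icc_self
  have hnn : 0 ≤ᵐ[volume.restrict (Ioo 0 (π/2))] fun θ => Real.sin θ^n * Wn n := by
    filter_upwards [ae_restrict_mem measurableSet_Ioo] with θ hθ
    exact mul_nonneg (pow_nonneg (Real.sin_pos_of_pos_of_lt_pi hθ.1
      (hθ.2.trans (by linarith [pi_pos]))).le n) (Wn_nonneg n)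
  rw [← ofReal_integral_eq_lintegral_ofReal hInt hnn]
  rw [MeasureTheory.integral_mul_const, ← Wn_Ioo n,
    ENNReal.toReal_ofReal (mul_nonneg (Wn_nonneg n) (Wn_nonneg n)), sq]

theorem stmt_3 : ∀ n : ℕ,
    (∫ x in (0:ℝ)..1, x ^ n * ellK' x)
      = (π / 4) * Real.Gamma ((n + 1) / 2) ^ 2 / Real.Gamma ((n + 2) / 2) ^ 2 := by
  intro n
  rw [main n, Wn_sq n, Rn]
end

section
/- For nonnegative integers n, define h(n) = Σ_{k=0}^{n} C(2n−2k, n−k)² · C(2k, k)². Then Σ_{n=0}^∞ h(n) tⁿ = (4/π²) K(4√t)² for all t with 0 ≤ 16t < 1. -/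
open Real intervalIntegral

noncomputable def h (n : ℕ) : ℝ :=
  ∑ k ∈ Finset.range (n + 1),
    ((Nat.choose (2 * (n - k)) (n - k) : ℝ))^2 * ((Nat.choose (2 * k) k : ℝ))^2

open Finset MeasureTheory

noncomputable def cb (k : ℕ) : ℝ := (Nat.choose (2*k) k : ℝ) / 4^k

lemma cb_nonneg (k : ℕ) : 0 ≤ cb k := by unfold cb; positivity

lemma cb_zero : cb 0 = 1 := by simp [cb]

lemma cb_succ_mul (k : ℕ) : ((k:ℝ)+1) * cb (k+1) = ((2*k+1)/2) * cb k := by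
  have hnat := Nat.succ_mul_centralBinom_succ k
  have h' : ((k+1 : ℕ) : ℝ) * ((2*(k+1)).choose (k+1) : ℝ)
      = 2 * (2*(k:ℝ)+1) * ((2*k).choose k : ℝ) := by
    exact_mod_cast congrArg (Nat.cast : ℕ → ℝ) hnat
  unfold cb
  push_cast at h' ⊢
  have h4 : (4:ℝ)^(k+1) = 4 * 4^k := by ring
  rw [h4]
  have hp : (0:ℝ) < 4^k := by positivity
  field_simp
  nlinarith [h']

lemma cb_succ (k : ℕ) : cb (k+1) = cb k * ((2*k+1)/(2*k+2)) := by
  have hm := cb_succ_mul k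
  have hk : ((k:ℝ)+1) ≠ 0 := by positivity
  field_simp at hm ⊢
  nlinarith [hm]

lemma cb_le_one (k : ℕ) : cb k ≤ 1 := by
  induction k with
  | zero => simp [cb_zero]
  | succ n ih =>
    rw [cb_succ]
    have h1 : (2*(n:ℝ)+1)/(2*n+2) ≤ 1 := by
      rw [div_le_one (by positivity)]; linarith
    calc cb n * ((2*(n:ℝ)+1)/(2*n+2)) ≤ 1 * 1 :=
          mul_le_mul (ih) h1 (by positivity) (by norm_num)
      _ = 1 := by norm_num

lemma cb_sq (k : ℕ) : cb k ^ 2 = (Nat.choose (2*k) k : ℝ)^2 / 16^k := by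
  unfold cb
  rw [div_pow, ← pow_mul, mul_comm k 2, pow_mul]
  norm_num

lemma cb_conv (n : ℕ) : ∑ k ∈ range (n+1), cb k * cb (n-k) = 1 := by
  induction n with
  | zero => simp [cb_zero]
  | succ n ih =>
    have hne : ((n:ℝ)+1) ≠ 0 := by positivity
    have key : ((n:ℝ)+1) * ∑ k ∈ range (n+2), cb k * cb (n+1-k)
        = ((n:ℝ)+1) * ∑ k ∈ range (n+1), cb k * cb (n-k) := by
      have split : ((n:ℝ)+1) * ∑ k ∈ range (n+2), cb k * cb (n+1-k)
          = (∑ k ∈ range (n+2), (k:ℝ) * (cb k * cb (n+1-k)))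
            + ∑ k ∈ range (n+2), ((n+1-k : ℕ) : ℝ) * (cb k * cb (n+1-k)) := by
        rw [mul_sum, ← sum_add_distrib]
        refine sum_congr rfl fun k hk => ?_
        have hk' : k ≤ n+1 := by simpa [Nat.lt_succ_iff] using hk
        have : ((n+1-k : ℕ) : ℝ) = (n:ℝ)+1-k := by
          push_cast [Nat.cast_sub hk']; ring
        rw [this]; ring
      have refl1 : ∑ k ∈ range (n+2), ((n+1-k : ℕ) : ℝ) * (cb k * cb (n+1-k))
          = ∑ k ∈ range (n+2), (k:ℝ) * (cb k * cb (n+1-k)) := by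
        rw [← Finset.sum_range_reflect (fun k => (k:ℝ) * (cb k * cb (n+1-k))) (n+2)]
        refine sum_congr rfl fun k hk => ?_
        have hk' : k ≤ n+1 := by simpa [Nat.lt_succ_iff] using hk
        have e1 : n + 2 - 1 - k = n + 1 - k := by omega
        have e2 : n + 1 - (n + 1 - k) = k := by omega
        rw [e1, e2]; ring
      have shift : ∑ k ∈ range (n+2), (k:ℝ) * (cb k * cb (n+1-k))
          = ∑ j ∈ range (n+1), ((j:ℝ)+1) * (cb (j+1) * cb (n-j)) := by
        rw [Finset.sum_range_succ' (fun k => (k:ℝ) * (cb k * cb (n+1-k))) (n+1)]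
        simp only [Nat.cast_zero, zero_mul, add_zero]
        refine sum_congr rfl fun j hj => ?_
        have e : n + 1 - (j + 1) = n - j := by omega
        rw [e]; push_cast; ring
      have rec' : ∑ j ∈ range (n+1), ((j:ℝ)+1) * (cb (j+1) * cb (n-j))
          = ∑ j ∈ range (n+1), ((2*(j:ℝ)+1)/2) * (cb j * cb (n-j)) := by
        refine sum_congr rfl fun j hj => ?_
        have hcb := cb_succ_mul j
        calc ((j:ℝ)+1) * (cb (j+1) * cb (n-j)) = (((j:ℝ)+1) * cb (j+1)) * cb (n-j) := by ring
          _ = (((2*(j:ℝ)+1)/2) * cb j) * cb (n-j) := by rw [hcb]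
          _ = ((2*(j:ℝ)+1)/2) * (cb j * cb (n-j)) := by ring
      have refl2 : ∑ j ∈ range (n+1), (j:ℝ) * (cb j * cb (n-j))
          = ∑ j ∈ range (n+1), ((n-j : ℕ):ℝ) * (cb j * cb (n-j)) := by
        rw [← Finset.sum_range_reflect (fun j => ((n-j : ℕ):ℝ) * (cb j * cb (n-j))) (n+1)]
        refine sum_congr rfl fun j hj => ?_
        have hj' : j ≤ n := by simpa [Nat.lt_succ_iff] using hj
        have e1 : n + 1 - 1 - j = n - j := by omega
        have e2 : n - (n - j) = j := by omega
        rw [e1, e2]; ring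
      have twoA' : ∑ j ∈ range (n+1), (2*(j:ℝ)) * (cb j * cb (n-j))
          = (n:ℝ) * ∑ j ∈ range (n+1), cb j * cb (n-j) := by
        rw [mul_sum]
        have hsplit : ∑ j ∈ range (n+1), (2*(j:ℝ)) * (cb j * cb (n-j))
            = ∑ j ∈ range (n+1), ((j:ℝ) * (cb j * cb (n-j)) + ((n-j:ℕ):ℝ) * (cb j * cb (n-j))) := by
          rw [sum_add_distrib, ← refl2]
          rw [← sum_add_distrib]
          exact sum_congr rfl fun j hj => by ring
        rw [hsplit]
        refine sum_congr rfl fun j hj => ?_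
        have hj' : j ≤ n := by simpa [Nat.lt_succ_iff] using hj
        have : ((n-j : ℕ) : ℝ) = (n:ℝ)-j := by push_cast [Nat.cast_sub hj']; ring
        rw [this]; ring
      rw [split, refl1, shift, rec']
      have expand : ∑ j ∈ range (n+1), ((2*(j:ℝ)+1)/2) * (cb j * cb (n-j))
          = (1/2) * ((∑ j ∈ range (n+1), (2*(j:ℝ)) * (cb j * cb (n-j)))
              + ∑ j ∈ range (n+1), cb j * cb (n-j)) := by
        rw [mul_add, mul_sum, mul_sum, ← sum_add_distrib]
        exact sum_congr rfl fun j hj => by ring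
      rw [expand, twoA']
      ring
    have := mul_left_cancel₀ hne key
    rw [show n+1+1 = n+2 from rfl, this, ih]

lemma cb_prod (k : ℕ) : (∏ i ∈ range k, (2*(i:ℝ)+1)/(2*i+2)) = cb k := by
  induction k with
  | zero => simp [cb_zero]
  | succ n ih => rw [prod_range_succ, ih, cb_succ]

lemma wallis (k : ℕ) : (∫ θ in (0:ℝ)..(π/2), Real.sin θ ^ (2*k)) = π/2 * cb k := by
  have hint : ∀ a b : ℝ, IntervalIntegrable (fun x => Real.sin x ^ (2*k)) volume a b :=
    fun a b => (continuous_sin.pow _).intervalIntegrable a b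
  have hsymm : (∫ x in (π/2)..π, Real.sin x ^ (2*k)) = ∫ x in (0:ℝ)..(π/2), Real.sin x ^ (2*k) := by
    have := intervalIntegral.integral_comp_sub_left (a := (0:ℝ)) (b := π/2)
      (fun x => Real.sin x ^ (2*k)) π
    simp only [Real.sin_pi_sub] at this
    rw [show π - π/2 = π/2 by ring, sub_zero] at this
    exact this.symm
  have hadd : (∫ x in (0:ℝ)..(π/2), Real.sin x ^ (2*k)) + ∫ x in (π/2)..π, Real.sin x ^ (2*k)
      = ∫ x in (0:ℝ)..π, Real.sin x ^ (2*k) :=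
    intervalIntegral.integral_add_adjacent_intervals (hint _ _) (hint _ _)
  have hpi : (∫ x in (0:ℝ)..π, Real.sin x ^ (2*k)) = π * cb k := by
    rw [integral_sin_pow_even, cb_prod]
  rw [hsymm] at hadd
  linarith

lemma sqrt_series {u : ℝ} (hu0 : 0 ≤ u) (hu1 : u < 1) :
    HasSum (fun k => cb k * u ^ k) (1 / Real.sqrt (1 - u)) := by
  have hsummable : Summable (fun k => cb k * u ^ k) := by
    refine Summable.of_nonneg_of_le (fun k => mul_nonneg (cb_nonneg k) (pow_nonneg hu0 k))
      (fun k => ?_) (summable_geometric_of_lt_one hu0 hu1)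
    calc cb k * u ^ k ≤ 1 * u ^ k := by
          exact mul_le_mul_of_nonneg_right (cb_le_one k) (by positivity)
      _ = u ^ k := one_mul _
  have hnorm : Summable (fun k => ‖cb k * u ^ k‖) := by
    refine hsummable.congr fun k => ?_
    rw [Real.norm_of_nonneg (mul_nonneg (cb_nonneg k) (pow_nonneg hu0 k))]
  set L := ∑' k, cb k * u ^ k with hL
  have hL0 : 0 ≤ L := tsum_nonneg (fun k => mul_nonneg (cb_nonneg k) (pow_nonneg hu0 k))
  have hsq : L * L = (1 - u)⁻¹ := by
    rw [hL, tsum_mul_tsum_eq_tsum_sum_range_of_summable_norm hnorm hnorm]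
    have hin : ∀ n : ℕ, (∑ k ∈ range (n+1), (cb k * u ^ k) * (cb (n-k) * u ^ (n-k))) = u ^ n := by
      intro n
      have hterm : ∀ k ∈ range (n+1), (cb k * u ^ k) * (cb (n-k) * u ^ (n-k))
          = (cb k * cb (n-k)) * u ^ n := by
        intro k hk
        have hk' : k ≤ n := by simpa [Nat.lt_succ_iff] using hk
        rw [show n = k + (n - k) by omega, pow_add]
        ring_nf
        rw [show k + (n-k) - k = n - k by omega]
      rw [sum_congr rfl hterm, ← sum_mul, cb_conv, one_mul]
    rw [tsum_congr hin, tsum_geometric_of_lt_one hu0 hu1]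
  have h1u : 0 < 1 - u := by linarith
  have hLval : L = 1 / Real.sqrt (1 - u) := by
    have hx : L^2 = (1 / Real.sqrt (1 - u))^2 := by
      rw [div_pow, one_pow, Real.sq_sqrt h1u.le, one_div, ← hsq]; ring
    have h2 : 0 ≤ 1 / Real.sqrt (1 - u) := by positivity
    nlinarith [hx, hL0, h2]
  rw [← hLval]
  exact hsummable.hasSum

lemma ellK_hasSum {x : ℝ} (hx0 : 0 ≤ x) (hx1 : x < 1) :
    HasSum (fun k => π/2 * cb k ^ 2 * (x^2) ^ k) (ellK x) := by
  have hx2 : x^2 < 1 := by nlinarith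
  have hx2' : 0 ≤ x^2 := sq_nonneg x
  set F : ℕ → ℝ → ℝ := fun k θ => cb k * (x^2 * Real.sin θ ^ 2) ^ k with hF
  have hFcont : ∀ k, Continuous (F k) := fun k => by
    simp only [hF]; continuity
  have hFnonneg : ∀ k θ, 0 ≤ F k θ := fun k θ =>
    mul_nonneg (cb_nonneg k) (pow_nonneg (by positivity) k)
  have hu : ∀ θ : ℝ, 0 ≤ x^2 * Real.sin θ ^ 2 ∧ x^2 * Real.sin θ ^ 2 < 1 := by
    intro θ
    refine ⟨by positivity, ?_⟩
    calc x^2 * Real.sin θ ^ 2 ≤ x^2 * 1 :=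
          mul_le_mul_of_nonneg_left (Real.sin_sq_le_one θ) hx2'
      _ < 1 := by linarith
  have hpt : ∀ θ : ℝ, HasSum (fun k => F k θ) (1 / Real.sqrt (1 - x^2 * Real.sin θ ^ 2)) :=
    fun θ => sqrt_series (hu θ).1 (hu θ).2
  have hFval : ∀ k, (∫ θ in Set.Ioc (0:ℝ) (π/2), F k θ) = π/2 * cb k ^ 2 * (x^2) ^ k := by
    intro k
    rw [← intervalIntegral.integral_of_le (by positivity : (0:ℝ) ≤ π/2)]
    have heq : ∀ θ ∈ Set.uIcc (0:ℝ) (π/2), F k θ = (cb k * (x^2)^k) * Real.sin θ ^ (2*k) := by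
      intro θ _
      simp only [hF, mul_pow, pow_mul]
      ring
    rw [intervalIntegral.integral_congr heq, intervalIntegral.integral_const_mul, wallis]
    ring
  have hF_int : ∀ k, Integrable (F k) (volume.restrict (Set.Ioc (0:ℝ) (π/2))) :=
    fun k => (hFcont k).integrableOn_Ioc
  have hbound : ∀ k, (∫ θ in Set.Ioc (0:ℝ) (π/2), ‖F k θ‖) = π/2 * cb k ^ 2 * (x^2) ^ k := by
    intro k
    rw [← hFval k]
    exact integral_congr_ae (Filter.Eventually.of_forall fun θ =>
      Real.norm_of_nonneg (hFnonneg k θ))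
  have hF_sum : Summable fun k => ∫ θ in Set.Ioc (0:ℝ) (π/2), ‖F k θ‖ := by
    simp only [hbound]
    refine Summable.of_nonneg_of_le (fun k => by positivity) (fun k => ?_)
      ((summable_geometric_of_lt_one hx2' hx2).mul_left (π/2))
    have h1 : cb k ^ 2 ≤ 1 := by
      have := cb_le_one k; have := cb_nonneg k; nlinarith
    have hp : (0:ℝ) ≤ (x^2)^k := by positivity
    have hππ : (0:ℝ) ≤ π/2 := by positivity
    have := mul_le_mul_of_nonneg_right (mul_le_mul_of_nonneg_left h1 hππ) hp
    simpa using this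
  have hexch := MeasureTheory.integral_tsum_of_summable_integral_norm hF_int hF_sum
  have hEll : ellK x = ∫ θ in Set.Ioc (0:ℝ) (π/2), (∑' k, F k θ) := by
    rw [ellK, intervalIntegral.integral_of_le (by positivity : (0:ℝ) ≤ π/2)]
    exact integral_congr_ae (Filter.Eventually.of_forall fun θ => ((hpt θ).tsum_eq).symm)
  have hsummable : Summable (fun k => π/2 * cb k ^ 2 * (x^2) ^ k) := by
    refine hF_sum.congr fun k => ?_
    rw [hbound]
  have hval : (∑' k, π/2 * cb k ^ 2 * (x^2) ^ k) = ellK x := by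
    rw [hEll, ← hexch]
    exact tsum_congr fun k => (hFval k).symm
  exact hval ▸ hsummable.hasSum

theorem stmt_7 : ∀ t : ℝ, 0 ≤ t → 16 * t < 1 →
    (∑' n : ℕ, h n * t ^ n) = (4 / π ^ 2) * ellK (4 * Real.sqrt t) ^ 2 := by
  intro t ht0 ht1
  set x : ℝ := 4 * Real.sqrt t with hxdef
  have hx0 : 0 ≤ x := by positivity
  have hx2 : x^2 = 16*t := by
    rw [hxdef, mul_pow, Real.sq_sqrt ht0]; ring
  have hx1 : x < 1 := by nlinarith
  have hx2lt : x^2 < 1 := by nlinarith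
  have hx2' : (0:ℝ) ≤ x^2 := sq_nonneg x
  have hs := ellK_hasSum hx0 hx1
  set f : ℕ → ℝ := fun k => π/2 * cb k ^ 2 * (x^2) ^ k with hf
  have hfnonneg : ∀ k, 0 ≤ f k := fun k => by
    have := cb_nonneg k; positivity
  have hnorm : Summable fun k => ‖f k‖ := by
    refine Summable.of_nonneg_of_le (fun k => norm_nonneg _) (fun k => ?_)
      ((summable_geometric_of_lt_one hx2' hx2lt).mul_left (π/2))
    rw [Real.norm_of_nonneg (hfnonneg k), hf]
    have h1 : cb k ^ 2 ≤ 1 := by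
      have := cb_le_one k; have := cb_nonneg k; nlinarith
    have hp : (0:ℝ) ≤ (x^2)^k := by positivity
    have hππ : (0:ℝ) ≤ π/2 := by positivity
    have := mul_le_mul_of_nonneg_right (mul_le_mul_of_nonneg_left h1 hππ) hp
    simpa using this
  have hsq : ellK x ^ 2 = ∑' n, π^2/4 * (h n * t ^ n) := by
    rw [pow_two, ← hs.tsum_eq, tsum_mul_tsum_eq_tsum_sum_range_of_summable_norm hnorm hnorm]
    refine tsum_congr fun n => ?_
    have hterm : ∀ k ∈ range (n+1), f k * f (n-k)
        = π^2/4 * (((Nat.choose (2*(n-k)) (n-k) : ℝ))^2 * ((Nat.choose (2*k) k : ℝ))^2 * t^n) := by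
      intro k hk
      have hkn : k + (n-k) = n := by
        have : k ≤ n := by simpa [Nat.lt_succ_iff] using hk
        omega
      have hx2n : (x^2)^k * (x^2)^(n-k) = (16:ℝ)^n * t^n := by
        rw [← pow_add, hkn, hx2, mul_pow]
      have h16 : (16:ℝ)^k * (16:ℝ)^(n-k) = 16^n := by rw [← pow_add, hkn]
      calc f k * f (n-k)
          = π^2/4 * (cb k ^2 * cb (n-k) ^2) * ((x^2)^k * (x^2)^(n-k)) := by rw [hf]; ring
        _ = π^2/4 * (((Nat.choose (2*k) k : ℝ))^2 * ((Nat.choose (2*(n-k)) (n-k) : ℝ))^2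
              / ((16:ℝ)^k * (16:ℝ)^(n-k))) * ((16:ℝ)^n * t^n) := by
            rw [cb_sq, cb_sq, hx2n, div_mul_div_comm]
        _ = π^2/4 * (((Nat.choose (2*(n-k)) (n-k) : ℝ))^2 * ((Nat.choose (2*k) k : ℝ))^2 * t^n) := by
            rw [h16]
            have h16n : ((16:ℝ)^n) ≠ 0 := by positivity
            field_simp
    rw [sum_congr rfl hterm, ← mul_sum, h, ← sum_mul]
  rw [hsq, tsum_mul_left]
  have hπ : π ≠ 0 := Real.pi_ne_zero
  field_simp
end

section
/- ∫₀¹ x·K'(x)² dx = (7/4)·ζ(3). -/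
open Real intervalIntegral

open MeasureTheory Set

namespace Aux12

/-- inner integrand -/
noncomputable def fI (x θ : ℝ) : ℝ := 1 / Real.sqrt (1 - (1 - x^2) * Real.sin θ ^ 2)

/-- the odd tan-half functions -/
noncomputable def gI (k : ℕ) (θ : ℝ) : ℝ := Real.tan (θ/2) ^ (2*k+1) / Real.sin θ

noncomputable def T : Set ℝ := Ioc 0 (π/2)
noncomputable def U : Set ℝ := Ioc 0 1

lemma measurable_fI : Measurable (Function.uncurry fI) := by
  unfold Function.uncurry fI; fun_prop

lemma measurable_ellK : Measurable ellK := by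
  have h : ellK = fun x => ∫ θ in Ioc (0:ℝ) (π/2), 1 / Real.sqrt (1 - x^2 * Real.sin θ ^ 2) := by
    funext x
    rw [ellK, intervalIntegral.integral_of_le (by positivity)]
  rw [h]
  exact (MeasureTheory.StronglyMeasurable.integral_prod_right'
    (f := fun p : ℝ × ℝ => 1 / Real.sqrt (1 - p.1^2 * Real.sin p.2 ^ 2))
    (by apply Measurable.stronglyMeasurable; fun_prop)).measurable

lemma measurable_ellK' : Measurable ellK' := by
  have : ellK' = ellK ∘ (fun x => Real.sqrt (1 - x^2)) := rfl
  rw [this]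
  exact measurable_ellK.comp (by fun_prop)

lemma fI_pos {x : ℝ} (hx : x ∈ U) (θ : ℝ) : 0 < 1 - (1 - x^2) * Real.sin θ ^ 2 := by
  obtain ⟨h1, h2⟩ := hx
  have hx2 : (0:ℝ) ≤ 1 - x^2 := by nlinarith
  have h3 : (1 - x^2) * Real.sin θ ^ 2 ≤ 1 - x^2 :=
    mul_le_of_le_one_right hx2 (Real.sin_sq_le_one θ)
  nlinarith

lemma contOn_fI {x : ℝ} (hx : x ∈ U) : Continuous (fun θ => fI x θ) := by
  apply continuous_const.div
  · fun_prop
  · intro θ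
    exact (Real.sqrt_pos.2 (fI_pos hx θ)).ne'

lemma ellK'_eq {x : ℝ} (hx : x ∈ U) : ellK' x = ∫ θ in T, fI x θ := by
  have h2 : Real.sqrt (1 - x^2) ^ 2 = 1 - x^2 :=
    Real.sq_sqrt (by nlinarith [hx.1, hx.2])
  rw [ellK', ellK, intervalIntegral.integral_of_le (by positivity), h2]
  rfl

lemma fI_nonneg (x θ : ℝ) : 0 ≤ fI x θ := by
  rw [fI]
  positivity

lemma integrableOn_fI {x : ℝ} (hx : x ∈ U) : IntegrableOn (fun θ => fI x θ) T := by
  have h1 : IntegrableOn (fun θ => fI x θ) (Icc (0:ℝ) (π/2)) volume :=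
    ContinuousOn.integrableOn_Icc (contOn_fI hx).continuousOn
  exact h1.mono_set Ioc_subset_Icc_self

lemma ellK'_nonneg {x : ℝ} (hx : x ∈ U) : 0 ≤ ellK' x := by
  rw [ellK'_eq hx]
  exact setIntegral_nonneg measurableSet_Ioc (fun θ _ => fI_nonneg x θ)

lemma ofReal_ellK' {x : ℝ} (hx : x ∈ U) :
    ENNReal.ofReal (ellK' x) = ∫⁻ θ in T, ENNReal.ofReal (fI x θ) := by
  rw [ellK'_eq hx]
  exact MeasureTheory.ofReal_integral_eq_lintegral_ofReal (integrableOn_fI hx)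
    (Filter.Eventually.of_forall (fun θ => fI_nonneg x θ))

/-- Step B -/
lemma step_B {x : ℝ} (hx : x ∈ U) :
    ENNReal.ofReal (x * ellK' x ^ 2)
      = ∫⁻ θ in T, ∫⁻ φ in T, ENNReal.ofReal (x * fI x θ * fI x φ) := by
  have hxnn : (0:ℝ) ≤ x := hx.1.le
  have hKnn := ellK'_nonneg hx
  calc ENNReal.ofReal (x * ellK' x ^ 2)
      = (ENNReal.ofReal x * ENNReal.ofReal (ellK' x)) * ENNReal.ofReal (ellK' x) := by
        rw [← ENNReal.ofReal_mul hxnn, ← ENNReal.ofReal_mul (by positivity)]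
        ring_nf
    _ = ∫⁻ θ in T, (ENNReal.ofReal x * ENNReal.ofReal (fI x θ)) * ENNReal.ofReal (ellK' x) := by
        rw [MeasureTheory.lintegral_mul_const' _ _ ENNReal.ofReal_ne_top,
          MeasureTheory.lintegral_const_mul' _ _ ENNReal.ofReal_ne_top, ← ofReal_ellK' hx]
    _ = ∫⁻ θ in T, ∫⁻ φ in T, ENNReal.ofReal (x * fI x θ * fI x φ) := by
        apply lintegral_congr
        intro θ
        rw [ofReal_ellK' hx, ← MeasureTheory.lintegral_const_mul'
          (ENNReal.ofReal x * ENNReal.ofReal (fI x θ)) _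
          (by exact ENNReal.mul_ne_top ENNReal.ofReal_ne_top ENNReal.ofReal_ne_top)]
        apply lintegral_congr
        intro φ
        rw [ENNReal.ofReal_mul (mul_nonneg hxnn (fI_nonneg x θ)), ENNReal.ofReal_mul hxnn]

lemma radicand_pos {α x : ℝ} (hα : α ∈ Ioo 0 (π/2)) (hx : x ∈ Icc (0:ℝ) 1) :
    0 < 1 - (1-x^2) * Real.sin α ^ 2 := by
  obtain ⟨h1, h2⟩ := hα
  obtain ⟨hx0, hx1⟩ := hx
  have hc : 0 < Real.cos α := Real.cos_pos_of_mem_Ioo ⟨by linarith [Real.pi_pos], h2⟩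
  have hs1 : Real.sin α ^ 2 < 1 := by nlinarith [Real.sin_sq_add_cos_sq α]
  have hle : (1-x^2) * Real.sin α ^ 2 ≤ Real.sin α ^ 2 :=
    mul_le_of_le_one_left (sq_nonneg _) (by nlinarith)
  linarith

/-- Step D: inner x-integral closed form -/
lemma step_D {θ φ : ℝ} (hθ : θ ∈ Ioo 0 (π/2)) (hφ : φ ∈ Ioo 0 (π/2)) :
    ∫⁻ x in U, ENNReal.ofReal (x * fI x θ * fI x φ)
      = ENNReal.ofReal ((Real.log (Real.sin θ + Real.sin φ)
          - Real.log (Real.sin θ * Real.cos φ + Real.sin φ * Real.cos θ))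
          / (Real.sin θ * Real.sin φ)) := by
  have hpi := Real.pi_pos
  obtain ⟨hθ1, hθ2⟩ := hθ
  obtain ⟨hφ1, hφ2⟩ := hφ
  have hsθ : 0 < Real.sin θ := Real.sin_pos_of_pos_of_lt_pi hθ1 (by linarith)
  have hsφ : 0 < Real.sin φ := Real.sin_pos_of_pos_of_lt_pi hφ1 (by linarith)
  have hcθ : 0 < Real.cos θ := Real.cos_pos_of_mem_Ioo ⟨by linarith, hθ2⟩
  have hcφ : 0 < Real.cos φ := Real.cos_pos_of_mem_Ioo ⟨by linarith, hφ2⟩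
  set A : ℝ → ℝ := fun x => Real.sqrt (1 - (1-x^2) * Real.sin θ ^ 2) with hA
  set B : ℝ → ℝ := fun x => Real.sqrt (1 - (1-x^2) * Real.sin φ ^ 2) with hB
  have hApos : ∀ x ∈ Icc (0:ℝ) 1, 0 < A x :=
    fun x hx => Real.sqrt_pos.2 (radicand_pos ⟨hθ1, hθ2⟩ hx)
  have hBpos : ∀ x ∈ Icc (0:ℝ) 1, 0 < B x :=
    fun x hx => Real.sqrt_pos.2 (radicand_pos ⟨hφ1, hφ2⟩ hx)
  set G : ℝ → ℝ := fun x => Real.sin θ * B x + Real.sin φ * A x with hG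
  have hGpos : ∀ x ∈ Icc (0:ℝ) 1, 0 < G x := fun x hx => by
    have := hApos x hx; have := hBpos x hx; positivity
  set p : ℝ → ℝ := fun x => x * fI x θ * fI x φ with hp
  have hpA : ∀ x, p x = x * (1 / A x) * (1 / B x) := fun x => rfl
  -- continuity / integrability
  have hcont : ContinuousOn p (Icc 0 1) := by
    apply ContinuousOn.mul
    apply ContinuousOn.mul continuousOn_id
    · exact ContinuousOn.div continuousOn_const (by fun_prop)
        (fun x hx => (hApos x hx).ne')
    · exact ContinuousOn.div continuousOn_const (by fun_prop)
        (fun x hx => (hBpos x hx).ne')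
  have hInt : IntegrableOn p (Ioc 0 1) :=
    (hcont.integrableOn_Icc).mono_set Ioc_subset_Icc_self
  have hnn : 0 ≤ᵐ[volume.restrict (Ioc (0:ℝ) 1)] p := by
    rw [Filter.EventuallyLE, ae_restrict_iff' measurableSet_Ioc]
    apply Filter.Eventually.of_forall
    intro x hx
    have h1 := fI_nonneg x θ
    have h2 := fI_nonneg x φ
    have h0 : (0:ℝ) ≤ x := hx.1.le
    positivity
  -- FTC
  have hderiv : ∀ x ∈ Set.uIcc (0:ℝ) 1,
      HasDerivAt (fun x => Real.log (G x) / (Real.sin θ * Real.sin φ)) (p x) x := by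
    intro x hx
    rw [Set.uIcc_of_le (by norm_num : (0:ℝ) ≤ 1)] at hx
    have hAx := hApos x hx
    have hBx := hBpos x hx
    have hGx := hGpos x hx
    have hderivA : HasDerivAt A (x * Real.sin θ ^ 2 / A x) x := by
      have hu : HasDerivAt (fun x : ℝ => 1 - (1-x^2) * Real.sin θ ^ 2)
          (2*x*Real.sin θ ^2) x := by
        have h1 : HasDerivAt (fun x:ℝ => x^2) (2*x) x := by simpa using hasDerivAt_pow 2 x
        have h2 := ((h1.const_sub 1).mul_const (Real.sin θ ^ 2)).const_sub 1
        refine h2.congr_deriv ?_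
        ring
      have := (Real.hasDerivAt_sqrt (radicand_pos ⟨hθ1, hθ2⟩ hx).ne').comp x hu
      refine this.congr_deriv ?_
      rw [hA]
      field_simp
    have hderivB : HasDerivAt B (x * Real.sin φ ^ 2 / B x) x := by
      have hu : HasDerivAt (fun x : ℝ => 1 - (1-x^2) * Real.sin φ ^ 2)
          (2*x*Real.sin φ ^2) x := by
        have h1 : HasDerivAt (fun x:ℝ => x^2) (2*x) x := by simpa using hasDerivAt_pow 2 x
        have h2 := ((h1.const_sub 1).mul_const (Real.sin φ ^ 2)).const_sub 1
        refine h2.congr_deriv ?_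
        ring
      have := (Real.hasDerivAt_sqrt (radicand_pos ⟨hφ1, hφ2⟩ hx).ne').comp x hu
      refine this.congr_deriv ?_
      rw [hB]
      field_simp
    have hderivG : HasDerivAt G
        (Real.sin θ * (x * Real.sin φ ^ 2 / B x) + Real.sin φ * (x * Real.sin θ ^ 2 / A x)) x :=
      (hderivB.const_mul (Real.sin θ)).add (hderivA.const_mul (Real.sin φ))
    have hlog := (Real.hasDerivAt_log hGx.ne').comp x hderivG
    have hfin := hlog.div_const (Real.sin θ * Real.sin φ)
    refine hfin.congr_deriv ?_
    rw [hpA, hG]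
    field_simp
    ring
  have hIInt : IntervalIntegrable p volume 0 1 := by
    rw [intervalIntegrable_iff_integrableOn_Ioc_of_le (by norm_num : (0:ℝ) ≤ 1)]
    exact hInt
  have hftc := intervalIntegral.integral_eq_sub_of_hasDerivAt hderiv hIInt
  have hval : (∫ x in (0:ℝ)..1, p x)
      = (Real.log (Real.sin θ + Real.sin φ)
          - Real.log (Real.sin θ * Real.cos φ + Real.sin φ * Real.cos θ))
          / (Real.sin θ * Real.sin φ) := by
    rw [hftc]
    have hA1 : A 1 = 1 := by rw [hA]; norm_num
    have hB1 : B 1 = 1 := by rw [hB]; norm_num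
    have hA0 : A 0 = Real.cos θ := by
      rw [hA]
      norm_num
      rw [← Real.cos_sq' θ]
      exact Real.sqrt_sq hcθ.le
    have hB0 : B 0 = Real.cos φ := by
      rw [hB]
      norm_num
      rw [← Real.cos_sq' φ]
      exact Real.sqrt_sq hcφ.le
    rw [hG]
    simp only [hA1, hB1, hA0, hB0]
    rw [div_sub_div_same]
    ring_nf
  have hT : U = Ioc (0:ℝ) 1 := rfl
  rw [hT, ← MeasureTheory.ofReal_integral_eq_lintegral_ofReal hInt hnn]
  congr 1
  rw [← intervalIntegral.integral_of_le (by norm_num : (0:ℝ) ≤ 1)]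
  exact hval

/-- Step E: log series -/
lemma step_E {θ φ : ℝ} (hθ : θ ∈ Ioo 0 (π/2)) (hφ : φ ∈ Ioo 0 (π/2)) :
    HasSum (fun k : ℕ => (2 / (2*(k:ℝ)+1)) * gI k θ * gI k φ)
      ((Real.log (Real.sin θ + Real.sin φ)
          - Real.log (Real.sin θ * Real.cos φ + Real.sin φ * Real.cos θ))
          / (Real.sin θ * Real.sin φ)) := by
  have hpi := Real.pi_pos
  obtain ⟨hθ1, hθ2⟩ := hθ
  obtain ⟨hφ1, hφ2⟩ := hφ
  have hsθ : 0 < Real.sin θ := Real.sin_pos_of_pos_of_lt_pi hθ1 (by linarith)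
  have hsφ : 0 < Real.sin φ := Real.sin_pos_of_pos_of_lt_pi hφ1 (by linarith)
  have hcθ : 0 < Real.cos θ := Real.cos_pos_of_mem_Ioo ⟨by linarith, hθ2⟩
  have hcφ : 0 < Real.cos φ := Real.cos_pos_of_mem_Ioo ⟨by linarith, hφ2⟩
  set ta := Real.tan (θ/2) with hta
  set tb := Real.tan (φ/2) with htb
  have hta0 : 0 < ta := Real.tan_pos_of_pos_of_lt_pi_div_two (by linarith) (by linarith)
  have htb0 : 0 < tb := Real.tan_pos_of_pos_of_lt_pi_div_two (by linarith) (by linarith)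
  have hta1 : ta < 1 := by
    have h := Real.tan_lt_tan_of_nonneg_of_lt_pi_div_two
      (by linarith : (0:ℝ) ≤ θ/2) (by linarith : π/4 < π/2) (by linarith : θ/2 < π/4)
    rwa [Real.tan_pi_div_four] at h
  have htb1 : tb < 1 := by
    have h := Real.tan_lt_tan_of_nonneg_of_lt_pi_div_two
      (by linarith : (0:ℝ) ≤ φ/2) (by linarith : π/4 < π/2) (by linarith : φ/2 < π/4)
    rwa [Real.tan_pi_div_four] at h
  set w := ta * tb with hw
  have hw0 : 0 < w := mul_pos hta0 htb0
  have hw1 : w < 1 := by nlinarith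
  have habs : |w| < 1 := by rw [abs_of_pos hw0]; exact hw1
  have habs' : |(-w)| < 1 := by rwa [abs_neg]
  have h1 := Real.hasSum_pow_div_log_of_abs_lt_one habs
  have h2 := Real.hasSum_pow_div_log_of_abs_lt_one habs'
  have h3 := h1.sub h2
  -- key algebraic identity
  have hccθ : 0 < Real.cos (θ/2) :=
    Real.cos_pos_of_mem_Ioo ⟨by linarith, by linarith⟩
  have hccφ : 0 < Real.cos (φ/2) :=
    Real.cos_pos_of_mem_Ioo ⟨by linarith, by linarith⟩
  have hssθ : 0 < Real.sin (θ/2) := Real.sin_pos_of_pos_of_lt_pi (by linarith) (by linarith)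
  have hssφ : 0 < Real.sin (φ/2) := Real.sin_pos_of_pos_of_lt_pi (by linarith) (by linarith)
  have hkey : (Real.sin θ + Real.sin φ) * (1 - w)
      = (Real.sin θ * Real.cos φ + Real.sin φ * Real.cos θ) * (1 + w) := by
    have hsinθ : Real.sin θ = 2 * Real.sin (θ/2) * Real.cos (θ/2) := by
      rw [show θ = 2*(θ/2) by ring, Real.sin_two_mul]; ring_nf
    have hsinφ : Real.sin φ = 2 * Real.sin (φ/2) * Real.cos (φ/2) := by
      rw [show φ = 2*(φ/2) by ring, Real.sin_two_mul]; ring_nf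
    have hcosθ : Real.cos θ = 2 * Real.cos (θ/2)^2 - 1 := by
      rw [show θ = 2*(θ/2) by ring, Real.cos_two_mul]; ring_nf
    have hcosφ : Real.cos φ = 2 * Real.cos (φ/2)^2 - 1 := by
      rw [show φ = 2*(φ/2) by ring, Real.cos_two_mul]; ring_nf
    have htaeq : ta = Real.sin (θ/2) / Real.cos (θ/2) := Real.tan_eq_sin_div_cos _
    have htbeq : tb = Real.sin (φ/2) / Real.cos (φ/2) := Real.tan_eq_sin_div_cos _
    have pa := Real.sin_sq_add_cos_sq (θ/2)
    have pb := Real.sin_sq_add_cos_sq (φ/2)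
    rw [hw, htaeq, htbeq, hsinθ, hsinφ, hcosθ, hcosφ]
    field_simp
    linear_combination (-2*Real.sin (θ/2)*Real.cos (θ/2)^2*Real.cos (φ/2)) * pb
      + (-2*Real.cos (θ/2)*Real.sin (φ/2)*Real.cos (φ/2)^2) * pa
  have h1w : (0:ℝ) < 1 - w := by linarith
  have h2w : (0:ℝ) < 1 + w := by linarith
  have hst : (0:ℝ) < Real.sin θ + Real.sin φ := by linarith
  have hden : (0:ℝ) < Real.sin θ * Real.cos φ + Real.sin φ * Real.cos θ := by positivity
  have hlogeq : Real.log (Real.sin θ + Real.sin φ)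
      - Real.log (Real.sin θ * Real.cos φ + Real.sin φ * Real.cos θ)
      = Real.log (1 + w) - Real.log (1 - w) := by
    have hc := congrArg Real.log hkey
    rw [Real.log_mul hst.ne' h1w.ne', Real.log_mul hden.ne' h2w.ne'] at hc
    linarith
  -- reindex the series over even indices
  have hinj : Function.Injective (fun k : ℕ => 2*k) := fun a b h => by
    simp only at h; omega
  have hvan : ∀ n ∉ Set.range (fun k : ℕ => 2*k),
      (fun n : ℕ => w^(n+1)/((n:ℝ)+1) - (-w)^(n+1)/((n:ℝ)+1)) n = 0 := by
    intro n hn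
    have hodd : ∃ m, n = 2*m+1 := by
      rcases Nat.even_or_odd n with he | ho
      · obtain ⟨m, hm⟩ := he
        exact absurd ⟨m, by show 2*m = n; omega⟩ hn
      · obtain ⟨m, hm⟩ := ho
        exact ⟨m, hm⟩
    obtain ⟨m, rfl⟩ := hodd
    have heven : Even (2*m+1+1) := by exact ⟨m+1, by omega⟩
    simp only [heven.neg_pow, sub_self]
  have h4 := (hinj.hasSum_iff hvan).2 h3
  have h5 := h4.div_const (Real.sin θ * Real.sin φ)
  convert h5 using 1
  · rfl
  · funext k
    simp only [Function.comp]
    have hoddpow : (-w)^(2*k+1) = -(w^(2*k+1)) := Odd.neg_pow (odd_two_mul_add_one k) w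
    rw [hoddpow, gI, gI, ← hta, ← htb, hw, mul_pow]
    have hne1 : (2*(k:ℝ)+1) ≠ 0 := by positivity
    push_cast
    field_simp [hsθ.ne', hsφ.ne']
    ring
  · rw [hlogeq]
    have : (1:ℝ) - (-w) = 1 + w := by ring
    rw [this]
    ring

lemma gI_nonneg {θ : ℝ} (hθ : θ ∈ Ioo 0 (π/2)) (k : ℕ) : 0 ≤ gI k θ := by
  obtain ⟨h1, h2⟩ := hθ
  have hpi := Real.pi_pos
  apply div_nonneg
  · apply pow_nonneg
    exact Real.tan_nonneg_of_nonneg_of_le_pi_div_two (by linarith) (by linarith)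
  · exact (Real.sin_pos_of_pos_of_lt_pi h1 (by linarith)).le

/-- Step F -/
lemma step_F (k : ℕ) : ∫⁻ θ in Ioc (0:ℝ) (π/2), ENNReal.ofReal (gI k θ)
    = ENNReal.ofReal (1/(2*(k:ℝ)+1)) := by
  have hpi := Real.pi_pos
  set q : ℝ → ℝ := fun θ => Real.sin (θ/2) / Real.cos (θ/2) with hq
  set h : ℝ → ℝ := fun θ => q θ ^ (2*k) * (2 * Real.cos (θ/2)^2)⁻¹ with hh
  have hcospos : ∀ θ ∈ Icc (0:ℝ) (π/2), 0 < Real.cos (θ/2) := by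
    intro θ hθ
    obtain ⟨h1, h2⟩ := hθ
    apply Real.cos_pos_of_mem_Ioo
    rw [Set.mem_Ioo]
    constructor <;> linarith
  have hcongr : ∀ θ ∈ T, gI k θ = h θ := by
    intro θ hθ
    obtain ⟨h1, h2⟩ := hθ
    have hc : 0 < Real.cos (θ/2) := hcospos θ ⟨h1.le, h2⟩
    have hs : 0 < Real.sin (θ/2) :=
      Real.sin_pos_of_pos_of_lt_pi (by linarith) (by linarith)
    have hsin : Real.sin θ = 2 * Real.sin (θ/2) * Real.cos (θ/2) := by
      rw [show θ = 2*(θ/2) by ring, Real.sin_two_mul]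
      ring_nf
    rw [gI, Real.tan_eq_sin_div_cos, hsin, hh, hq]
    rw [pow_succ]
    field_simp
  have hIcc : ContinuousOn h (Icc 0 (π/2)) := by
    apply ContinuousOn.mul
    · apply ContinuousOn.pow
      exact ContinuousOn.div (by fun_prop) (by fun_prop)
        (fun θ hθ => (hcospos θ hθ).ne')
    · apply ContinuousOn.inv₀ (by fun_prop)
      intro θ hθ
      have := hcospos θ hθ
      positivity
  have hInt : IntegrableOn h (Ioc 0 (π/2)) :=
    (hIcc.integrableOn_Icc).mono_set Ioc_subset_Icc_self
  have hnn : 0 ≤ᵐ[volume.restrict (Ioc (0:ℝ) (π/2))] h := by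
    rw [Filter.EventuallyLE, ae_restrict_iff' measurableSet_Ioc]
    apply Filter.Eventually.of_forall
    intro θ hθ
    obtain ⟨h1, h2⟩ := hθ
    have hc : 0 < Real.cos (θ/2) := hcospos θ ⟨h1.le, h2⟩
    have hs : 0 < Real.sin (θ/2) :=
      Real.sin_pos_of_pos_of_lt_pi (by linarith) (by linarith)
    have hqpos : 0 < q θ := div_pos hs hc
    have : (0:ℝ) < 2 * Real.cos (θ/2)^2 := by positivity
    positivity
  rw [setLIntegral_congr_fun measurableSet_Ioc
    (fun θ hθ => by rw [hcongr θ hθ]),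
    ← MeasureTheory.ofReal_integral_eq_lintegral_ofReal hInt hnn]
  congr 1
  have hle : (0:ℝ) ≤ π/2 := by linarith
  have hftc : ∫ θ in (0:ℝ)..(π/2), h θ = q (π/2) ^ (2*k+1) / ((2*k+1:ℕ):ℝ)
      - q 0 ^ (2*k+1) / ((2*k+1:ℕ):ℝ) := by
    apply intervalIntegral.integral_eq_sub_of_hasDerivAt
      (f := fun θ => q θ ^ (2*k+1) / ((2*k+1:ℕ):ℝ))
    · intro θ hθ
      rw [Set.uIcc_of_le hle] at hθ
      have hc : 0 < Real.cos (θ/2) := hcospos θ hθ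
      have hds : HasDerivAt (fun θ : ℝ => Real.sin (θ/2)) (Real.cos (θ/2) * (1/2)) θ := by
        refine ((Real.hasDerivAt_sin (θ/2)).comp θ ((hasDerivAt_id θ).div_const 2)).congr_deriv ?_; ring
      have hdc : HasDerivAt (fun θ : ℝ => Real.cos (θ/2)) (-Real.sin (θ/2) * (1/2)) θ := by
        refine ((Real.hasDerivAt_cos (θ/2)).comp θ ((hasDerivAt_id θ).div_const 2)).congr_deriv ?_; ring
      have hq' : HasDerivAt q ((2 * Real.cos (θ/2)^2)⁻¹) θ := by
        have hd := hds.div hdc hc.ne'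
        refine hd.congr_deriv ?_
        have pyth := Real.sin_sq_add_cos_sq (θ/2)
        field_simp
        nlinarith [pyth]
      have hpow := (hq'.pow (2*k+1)).div_const ((2*k+1:ℕ):ℝ)
      refine hpow.congr_deriv ?_
      have hcast : ((2*k+1:ℕ):ℝ) ≠ 0 := by positivity
      rw [hh]
      field_simp
      ring
      rw [Nat.add_sub_cancel_left]
    · rw [intervalIntegrable_iff_integrableOn_Ioc_of_le hle]
      exact hInt
  rw [← intervalIntegral.integral_of_le hle, hftc, hq]
  simp only [Real.sin_pi_div_four, Real.cos_pi_div_four]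
  rw [show π/2/2 = π/4 by ring]
  norm_num

lemma summable_Z : Summable (fun n : ℕ => 1/((n:ℝ)+1)^3) := by
  have := (summable_one_div_nat_pow (p := 3)).2 (by norm_num)
  have h := (summable_nat_add_iff (f := fun n : ℕ => 1/(n:ℝ)^3) 1).2 this
  simpa using h

lemma measurable_gI (k : ℕ) : Measurable (gI k) := by
  have ht : Measurable Real.tan := by
    rw [show Real.tan = fun x => Real.sin x / Real.cos x from
      funext fun x => Real.tan_eq_sin_div_cos x]
    fun_prop
  unfold gI
  fun_prop

lemma summable_S : Summable (fun k : ℕ => 2/(2*(k:ℝ)+1)^3) := by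
  have h := summable_Z.comp_injective
    (i := fun k : ℕ => 2*k) (fun a b h => by simp only at h; omega)
  have h2 : Summable (fun k : ℕ => 1/((2*(k:ℝ))+1)^3) := by
    apply h.congr
    intro k
    show 1/(((2*k:ℕ):ℝ)+1)^3 = _
    push_cast
    ring_nf
  have := h2.mul_left 2
  apply this.congr
  intro k
  ring

/-- the φ-level integral -/
lemma inner_phi {θ : ℝ} (hθ : θ ∈ Ioo 0 (π/2)) :
    ∫⁻ φ in Ioo 0 (π/2), ∫⁻ x in U, ENNReal.ofReal (x * fI x θ * fI x φ)
      = ∑' k : ℕ, ENNReal.ofReal ((2/(2*(k:ℝ)+1)) * gI k θ)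
          * ENNReal.ofReal (1/(2*(k:ℝ)+1)) := by
  have hDE : ∀ φ ∈ Ioo (0:ℝ) (π/2), ∫⁻ x in U, ENNReal.ofReal (x * fI x θ * fI x φ)
      = ∑' k : ℕ, ENNReal.ofReal ((2/(2*(k:ℝ)+1)) * gI k θ * gI k φ) := by
    intro φ hφ
    rw [step_D hθ hφ, ← (step_E hθ hφ).tsum_eq]
    exact ENNReal.ofReal_tsum_of_nonneg
      (fun k => by
        have h1 := gI_nonneg hθ k
        have h2 := gI_nonneg hφ k
        positivity)
      (step_E hθ hφ).summable
  rw [setLIntegral_congr_fun measurableSet_Ioo hDE]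
  rw [lintegral_tsum (fun k => (Measurable.aemeasurable (by
    have := measurable_gI k
    fun_prop)))]
  congr 1
  funext k
  have hc : (0:ℝ) ≤ (2/(2*(k:ℝ)+1)) * gI k θ := by
    have := gI_nonneg hθ k
    positivity
  simp_rw [ENNReal.ofReal_mul hc]
  rw [MeasureTheory.lintegral_const_mul' _ _ ENNReal.ofReal_ne_top]
  congr 1
  rw [Measure.restrict_congr_set Ioo_ae_eq_Ioc]
  exact step_F k

lemma outer_theta :
    ∫⁻ θ in Ioo 0 (π/2), ∫⁻ φ in Ioo 0 (π/2), ∫⁻ x in U,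
        ENNReal.ofReal (x * fI x θ * fI x φ)
      = ∑' k : ℕ, ENNReal.ofReal (2/(2*(k:ℝ)+1)^3) := by
  rw [setLIntegral_congr_fun measurableSet_Ioo
    (fun θ hθ => inner_phi hθ)]
  rw [lintegral_tsum (fun k => (Measurable.aemeasurable (by
    have := measurable_gI k
    fun_prop)))]
  congr 1
  funext k
  have hc : (0:ℝ) ≤ 2/(2*(k:ℝ)+1) := by positivity
  simp_rw [ENNReal.ofReal_mul hc]
  rw [MeasureTheory.lintegral_mul_const' _ _ ENNReal.ofReal_ne_top,
    MeasureTheory.lintegral_const_mul' _ _ ENNReal.ofReal_ne_top,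
    Measure.restrict_congr_set Ioo_ae_eq_Ioc, step_F k]
  rw [← ENNReal.ofReal_mul hc, ← ENNReal.ofReal_mul (by positivity)]
  congr 1
  field_simp

lemma series_final :
    ∑' (k:ℕ), 2 / (2*(k:ℝ)+1)^3 = (7/4) * ∑' (n:ℕ), 1/((n:ℝ)+1)^3 := by
  set Z := ∑' (n:ℕ), 1/((n:ℝ)+1)^3 with hZ
  have hsum := summable_Z
  have hse : Summable (fun k : ℕ => 1/(((2*k:ℕ):ℝ)+1)^3) :=
    hsum.comp_injective (i := fun k : ℕ => 2*k) (fun a b h => by simp only at h; omega)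
  have hso : Summable (fun k : ℕ => 1/(((2*k+1:ℕ):ℝ)+1)^3) :=
    hsum.comp_injective (i := fun k : ℕ => 2*k+1) (fun a b h => by simp only at h; omega)
  have hsplit := tsum_even_add_odd (f := fun n : ℕ => 1/((n:ℝ)+1)^3) hse hso
  have hO : ∑' (k:ℕ), 1/((2*(k:ℝ))+1)^3 = (7/8) * Z := by
    have heven : ∑' (k:ℕ), 1/(((2*k:ℕ):ℝ)+1)^3 = ∑' (k:ℕ), 1/((2*(k:ℝ))+1)^3 :=
      tsum_congr (fun k => by push_cast; ring_nf)
    have hodd : ∑' (k:ℕ), 1/(((2*k+1:ℕ):ℝ)+1)^3 = (1/8) * Z := by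
      have h1 : ∀ k:ℕ, 1/(((2*k+1:ℕ):ℝ)+1)^3 = (1/8) * (1/((k:ℝ)+1)^3) := by
        intro k
        have hk : ((k:ℝ)+1) ≠ 0 := by positivity
        push_cast
        field_simp
        ring
      rw [tsum_congr h1, tsum_mul_left]
    rw [heven, hodd] at hsplit
    linarith
  calc ∑' (k:ℕ), 2 / (2*(k:ℝ)+1)^3 = 2 * ∑' (k:ℕ), 1/((2*(k:ℝ))+1)^3 := by
        rw [← tsum_mul_left]; congr 1; funext k; ring
    _ = (7/4) * Z := by rw [hO]; ring

end Aux12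

theorem stmt_12 :
    (∫ x in (0:ℝ)..1, x * ellK' x ^ 2) = (7 / 4) * ∑' n : ℕ, 1 / ((n : ℝ) + 1) ^ 3 := by
  classical
  have hmt : Measurable Real.tan := by
    rw [show Real.tan = fun x => Real.sin x / Real.cos x from
      funext fun x => Real.tan_eq_sin_div_cos x]
    fun_prop
  -- Step A : to lintegral
  have hmeas : AEStronglyMeasurable (fun x => x * ellK' x ^ 2)
      (volume.restrict (Aux12.U)) :=
    (measurable_id.mul (Aux12.measurable_ellK'.pow_const 2)).aestronglyMeasurable
  have hU : Aux12.U = Set.Ioc (0:ℝ) 1 := rfl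
  have hnn : 0 ≤ᵐ[volume.restrict (Aux12.U)] (fun x => x * ellK' x ^ 2) := by
    rw [hU, Filter.EventuallyLE, ae_restrict_iff' measurableSet_Ioc]
    apply Filter.Eventually.of_forall
    intro x hx
    have h0 : (0:ℝ) ≤ x := hx.1.le
    positivity
  have hA : (∫ x in (0:ℝ)..1, x * ellK' x ^ 2)
      = (∫⁻ x in Aux12.U, ENNReal.ofReal (x * ellK' x ^ 2)).toReal := by
    rw [intervalIntegral.integral_of_le (by norm_num : (0:ℝ) ≤ 1)]
    exact MeasureTheory.integral_eq_lintegral_of_nonneg_ae hnn hmeas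
  -- the triple lintegral computation
  have mfI3 : Measurable (fun p : ℝ × ℝ × ℝ =>
      ENNReal.ofReal (p.1 * Aux12.fI p.1 p.2.1 * Aux12.fI p.1 p.2.2)) := by
    unfold Aux12.fI
    fun_prop
  have hB' : ∫⁻ x in Aux12.U, ENNReal.ofReal (x * ellK' x ^ 2)
      = ∫⁻ x in Aux12.U, ∫⁻ θ in Aux12.T, ∫⁻ φ in Aux12.T,
          ENNReal.ofReal (x * Aux12.fI x θ * Aux12.fI x φ) := by
    rw [hU]
    exact setLIntegral_congr_fun measurableSet_Ioc
      (fun x hx => Aux12.step_B hx)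
  have hswap1 : ∫⁻ x in Aux12.U, ∫⁻ θ in Aux12.T, ∫⁻ φ in Aux12.T,
          ENNReal.ofReal (x * Aux12.fI x θ * Aux12.fI x φ)
      = ∫⁻ θ in Aux12.T, ∫⁻ x in Aux12.U, ∫⁻ φ in Aux12.T,
          ENNReal.ofReal (x * Aux12.fI x θ * Aux12.fI x φ) := by
    apply MeasureTheory.lintegral_lintegral_swap
    apply Measurable.aemeasurable
    apply Measurable.lintegral_prod_right (f := fun q : ℝ × ℝ => fun φ =>
      ENNReal.ofReal (q.1 * Aux12.fI q.1 q.2 * Aux12.fI q.1 φ))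
    unfold Function.uncurry Aux12.fI
    fun_prop
  have hswap2 : ∀ θ, ∫⁻ x in Aux12.U, ∫⁻ φ in Aux12.T,
          ENNReal.ofReal (x * Aux12.fI x θ * Aux12.fI x φ)
      = ∫⁻ φ in Aux12.T, ∫⁻ x in Aux12.U,
          ENNReal.ofReal (x * Aux12.fI x θ * Aux12.fI x φ) := by
    intro θ
    apply MeasureTheory.lintegral_lintegral_swap
    apply Measurable.aemeasurable
    unfold Function.uncurry Aux12.fI
    fun_prop
  have hIoo : volume.restrict (Aux12.T) = volume.restrict (Ioo 0 (π/2)) :=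
    (Measure.restrict_congr_set Ioo_ae_eq_Ioc).symm
  have htot : ∫⁻ x in Aux12.U, ENNReal.ofReal (x * ellK' x ^ 2)
      = ∑' k : ℕ, ENNReal.ofReal (2/(2*(k:ℝ)+1)^3) := by
    rw [hB', hswap1]
    rw [lintegral_congr hswap2]
    rw [show (∫⁻ θ in Aux12.T, ∫⁻ φ in Aux12.T, ∫⁻ x in Aux12.U,
          ENNReal.ofReal (x * Aux12.fI x θ * Aux12.fI x φ))
        = ∫⁻ θ in Ioo 0 (π/2), ∫⁻ φ in Ioo 0 (π/2), ∫⁻ x in Aux12.U,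
          ENNReal.ofReal (x * Aux12.fI x θ * Aux12.fI x φ) by
      rw [← hIoo]]
    exact Aux12.outer_theta
  -- sum it up
  have hSnn : ∀ k : ℕ, (0:ℝ) ≤ 2/(2*(k:ℝ)+1)^3 := fun k => by positivity
  have hofS : ∑' k : ℕ, ENNReal.ofReal (2/(2*(k:ℝ)+1)^3)
      = ENNReal.ofReal (∑' k : ℕ, 2/(2*(k:ℝ)+1)^3) :=
    (ENNReal.ofReal_tsum_of_nonneg hSnn Aux12.summable_S).symm
  rw [hA, htot, hofS, ENNReal.toReal_ofReal (tsum_nonneg hSnn)]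
  exact Aux12.series_final
end
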